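/- arXiv:2605.12568 — 6 statements merged into one kernel-verified Lean document; each statement's English description precedes it below -/
import Mathlib

section
/- Let m ≥ 1 be an integer. For all t ∈ [0, 1/2], I_t(m, m) ≤ (1/2)·[4t(1-t)]^{m-1}. -/
open MeasureTheory Real Set
open scoped ENNReal NNReal

/-- The Beta function `B(a,b)` as an integral. -/
noncomputable def betaFun (a b : ℝ) : ℝ :=
  ∫ x in (0:ℝ)..1, x ^ (a - 1) * (1 - x) ^ (b - 1)

/-- The Beta(a,b) probability measure on `ℝ`. -/
noncomputable def betaMeasure (a b : ℝ) : Measure ℝ :=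
  MeasureTheory.volume.withDensity
    (Set.indicator (Set.Ioo 0 1)
      (fun t => ENNReal.ofReal (t ^ (a - 1) * (1 - t) ^ (b - 1) / betaFun a b)))

/-- The regularised incomplete Beta function `I_x(a,b)`, with the convention that it is
`0` for `x ≤ 0` and `1` for `x ≥ 1`. -/
noncomputable def regIncBeta (a b x : ℝ) : ℝ :=
  if x ≤ 0 then 0 else if 1 ≤ x then 1
  else (∫ s in (0:ℝ)..x, s ^ (a - 1) * (1 - s) ^ (b - 1)) / betaFun a b

/-- The uniform probability measure on the sphere of radius `a` centred at the origin
of `ℝ^d`, obtained by normalising the surface measure on the unit sphere and scaling. -/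
noncomputable def sphereUniform (d : ℕ) (a : ℝ) : Measure (EuclideanSpace ℝ (Fin d)) :=
  Measure.map (fun x => a • x)
    ((((MeasureTheory.volume : Measure (EuclideanSpace ℝ (Fin d))).toSphere Set.univ)⁻¹) •
      Measure.map Subtype.val
        ((MeasureTheory.volume : Measure (EuclideanSpace ℝ (Fin d))).toSphere))

/-- For integer `m ≥ 1` and `t ∈ [0,1/2]`,
`I_t(m,m) ≤ (1/2)·(4t(1-t))^{m-1}`. -/
theorem stmt13 (m : ℕ) (hm : 1 ≤ m) (t : ℝ) (ht : t ∈ Set.Icc (0:ℝ) (1/2)) :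
    regIncBeta (m:ℝ) (m:ℝ) t ≤ (1/2) * (4*t*(1 - t)) ^ (m - 1) := by
  obtain ⟨ht0, ht2⟩ := ht
  set n := m - 1 with hn
  have hmn : (m:ℝ) - 1 = (n:ℝ) := by
    rw [hn, Nat.cast_sub hm]; norm_num
  set F : ℝ → ℝ := fun s => s ^ n * (1 - s) ^ n with hF
  have hFcont : Continuous F := by fun_prop
  have hInt : ∀ a b : ℝ, IntervalIntegrable F volume a b :=
    fun a b => hFcont.intervalIntegrable a b
  have hIeq : ∀ a b : ℝ,
      (∫ s in a..b, s ^ ((m:ℝ)-1) * (1-s) ^ ((m:ℝ)-1)) = ∫ s in a..b, F s := by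
    intro a b
    apply intervalIntegral.integral_congr
    intro s _
    simp [hF, hmn, Real.rpow_natCast]
  -- symmetry
  have hsymm : ∀ s : ℝ, F (1 - s) = F s := by
    intro s; simp only [hF]; ring_nf
  have h1 : (∫ x in (1/2:ℝ)..1, F x) = ∫ x in (0:ℝ)..(1/2:ℝ), F x := by
    have h := intervalIntegral.integral_comp_sub_left (a := (0:ℝ)) (b := 1/2) F 1
    simp only [hsymm] at h
    norm_num at h
    exact h.symm
  have hhalf : (∫ s in (0:ℝ)..1, F s) = 2 * ∫ s in (0:ℝ)..(1/2:ℝ), F s := by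
    rw [← intervalIntegral.integral_add_adjacent_intervals (hInt 0 (1/2)) (hInt (1/2) 1), h1]
    ring
  have hhalfpos : 0 < ∫ s in (0:ℝ)..(1/2:ℝ), F s := by
    apply intervalIntegral.intervalIntegral_pos_of_pos_on (hInt 0 (1/2))
    · intro x hx
      have hx0 := hx.1; have hx1 := hx.2
      apply mul_pos (pow_pos hx0 n) (pow_pos (by linarith) n)
    · norm_num
  have hBeta : betaFun (m:ℝ) (m:ℝ) = 2 * ∫ s in (0:ℝ)..(1/2:ℝ), F s := by
    rw [betaFun, hIeq, hhalf]
  have hBpos : 0 < betaFun (m:ℝ) (m:ℝ) := by rw [hBeta]; linarith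
  rcases eq_or_lt_of_le ht0 with heq | htpos
  · -- t = 0
    rw [regIncBeta, if_pos (le_of_eq heq.symm)]
    have h4 : (0:ℝ) ≤ 4*t*(1-t) := by nlinarith
    have := pow_nonneg h4 (m-1)
    linarith
  · -- t > 0
    rw [regIncBeta, if_neg (not_le.mpr htpos), if_neg (by norm_num; linarith), hIeq]
    rw [div_le_iff₀ hBpos, hBeta]
    -- goal : ∫ s in 0..t, F s ≤ 1/2 * (4*t*(1-t))^(m-1) * (2 * ∫ s in 0..(1/2), F s)
    have hscale : (∫ s in (0:ℝ)..t, F s) = (2*t) * ∫ u in (0:ℝ)..(1/2:ℝ), F (2*t*u) := by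
      have h := intervalIntegral.integral_comp_mul_left (a := (0:ℝ)) (b := 1/2) F
        (c := 2*t) (by linarith)
      rw [h, mul_zero]
      rw [show 2 * t * (1/2) = t by ring, smul_eq_mul, ← mul_assoc,
        mul_inv_cancel₀ (by linarith : (2*t) ≠ 0), one_mul]
    rw [hscale]
    have hmono : (∫ u in (0:ℝ)..(1/2:ℝ), F (2*t*u)) ≤
        ∫ u in (0:ℝ)..(1/2:ℝ), (4*t*(1-t))^n * F u := by
      apply intervalIntegral.integral_mono_on (by norm_num)
      · exact (hFcont.comp (by fun_prop)).intervalIntegrable 0 (1/2)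
      · exact ((continuous_const.mul hFcont)).intervalIntegrable 0 (1/2)
      · intro u hu
        obtain ⟨hu0, hu2⟩ := hu
        have key : 2*t*u * (1 - 2*t*u) ≤ (4*t*(1-t)) * (u * (1-u)) := by
          nlinarith [mul_nonneg (mul_nonneg ht0 hu0) (mul_nonneg (by linarith : (0:ℝ) ≤ 1-2*t) (by linarith : (0:ℝ) ≤ 1-2*u))]
        have hb0 : (0:ℝ) ≤ 2*t*u * (1 - 2*t*u) :=
          mul_nonneg (mul_nonneg (by linarith) hu0) (by nlinarith)
        calc F (2*t*u) = (2*t*u * (1 - 2*t*u))^n := by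
              simp only [hF, ← mul_pow]
          _ ≤ ((4*t*(1-t)) * (u * (1-u)))^n := pow_le_pow_left₀ hb0 key n
          _ = (4*t*(1-t))^n * F u := by simp only [hF, ← mul_pow]
    rw [intervalIntegral.integral_const_mul] at hmono
    have hx : (0:ℝ) ≤ (4*t*(1-t))^n := pow_nonneg (by nlinarith) n
    calc (2*t) * ∫ u in (0:ℝ)..(1/2:ℝ), F (2*t*u)
        ≤ (2*t) * ((4*t*(1-t))^n * ∫ u in (0:ℝ)..(1/2:ℝ), F u) := by
          apply mul_le_mul_of_nonneg_left hmono (by linarith)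
      _ ≤ 1 * ((4*t*(1-t))^n * ∫ u in (0:ℝ)..(1/2:ℝ), F u) := by
          apply mul_le_mul_of_nonneg_right (by linarith) (mul_nonneg hx hhalfpos.le)
      _ = 1/2 * (4*t*(1-t))^n * (2 * ∫ u in (0:ℝ)..(1/2:ℝ), F u) := by ring
end

section
/- Let δ ≥ 1 be a real number and δ' = ⌊δ⌋ ≥ 1. Then for all t ∈ [0, 1/2], I_t(δ, δ) ≤ I_t(δ', δ') ≤ t^{δ'} [4(1-t)]^{δ'-1}. -/
open MeasureTheory Real Set
open scoped ENNReal NNReal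

namespace Stmt14Aux


noncomputable def F (a : ℝ) : ℝ → ℝ := fun s => s ^ (a - 1) * (1 - s) ^ (a - 1)

lemma contF {a : ℝ} (ha : 1 ≤ a) : ContinuousOn (F a) (Icc 0 1) := by
  have h1 : ContinuousOn (fun s : ℝ => s ^ (a-1)) (Icc 0 1) :=
    continuousOn_id.rpow_const (fun x _ => Or.inr (by linarith))
  have h2 : ContinuousOn (fun s : ℝ => (1-s) ^ (a-1)) (Icc 0 1) :=
    (continuousOn_const.sub continuousOn_id).rpow_const (fun x _ => Or.inr (by linarith))
  exact h1.mul h2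

lemma intF {a u v : ℝ} (ha : 1 ≤ a) (hu : 0 ≤ u) (huv : u ≤ v) (hv : v ≤ 1) :
    IntervalIntegrable (F a) volume u v := by
  apply ContinuousOn.intervalIntegrable
  apply (contF ha).mono
  rw [uIcc_of_le huv]
  exact Icc_subset_Icc hu hv

lemma F_nonneg {a s : ℝ} (h0 : 0 ≤ s) (h1 : s ≤ 1) : 0 ≤ F a s :=
  mul_nonneg (rpow_nonneg h0 _) (rpow_nonneg (by linarith) _)

lemma F_pos {a s : ℝ} (h : s ∈ Ioo (0:ℝ) 1) : 0 < F a s :=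
  mul_pos (rpow_pos_of_pos h.1 _) (rpow_pos_of_pos (by linarith [h.2]) _)

lemma F_eq {a s : ℝ} (h0 : 0 ≤ s) (h1 : s ≤ 1) : F a s = (s * (1-s)) ^ (a-1) :=
  (Real.mul_rpow h0 (by linarith)).symm

lemma key_le {a b u v : ℝ} (ha : 1 ≤ a) (hab : a ≤ b) (hu : 0 ≤ u) (huv : u ≤ v) (hv : 0 < v) :
    u ^ (b-1) ≤ v ^ (b-a) * u ^ (a-1) := by
  rcases eq_or_lt_of_le hu with h|h
  · rcases eq_or_lt_of_le (le_trans ha hab) with hb|hb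
    · have ha1 : a = 1 := le_antisymm (hab.trans hb.symm.le) ha
      rw [← h, ← hb, ha1]
      simp
    · rw [← h, Real.zero_rpow (by linarith : b - 1 ≠ 0)]
      positivity
  · rw [show b - 1 = (b-a)+(a-1) by ring, Real.rpow_add h]
    exact mul_le_mul_of_nonneg_right (Real.rpow_le_rpow hu huv (by linarith))
      (Real.rpow_nonneg hu _)

lemma key_ge {a b u v : ℝ} (ha : 1 ≤ a) (hab : a ≤ b) (hv : 0 < v) (hvu : v ≤ u) :
    v ^ (b-a) * u ^ (a-1) ≤ u ^ (b-1) := by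
  have hu : 0 < u := lt_of_lt_of_le hv hvu
  rw [show b - 1 = (b-a)+(a-1) by ring, Real.rpow_add hu]
  exact mul_le_mul_of_nonneg_right (Real.rpow_le_rpow hv.le hvu (by linarith))
    (Real.rpow_nonneg hu.le _)

lemma F_symm (a : ℝ) (s : ℝ) : F a (1 - s) = F a s := by
  unfold F; rw [sub_sub_cancel]; ring

lemma integral_symm (a t : ℝ) : (∫ s in (1-t)..1, F a s) = ∫ s in (0:ℝ)..t, F a s := by
  have h := intervalIntegral.integral_comp_sub_left (a := (0:ℝ)) (b := t) (F a) 1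
  simp only [sub_zero] at h
  rw [← h]
  exact intervalIntegral.integral_congr (fun x _ => F_symm a x)


lemma claim1 {a b t : ℝ} (ha : 1 ≤ a) (hab : a ≤ b) (ht0 : 0 < t) (ht : t ≤ 1/2) :
    (∫ s in (0:ℝ)..t, F b s) / (∫ s in (0:ℝ)..1, F b s)
      ≤ (∫ s in (0:ℝ)..t, F a s) / (∫ s in (0:ℝ)..1, F a s) := by
  have hb : 1 ≤ b := le_trans ha hab
  have ht1 : t ≤ 1 - t := by linarith
  have h1t : (1:ℝ) - t ≤ 1 := by linarith
  have ht1' : t ≤ 1 := by linarith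
  set c : ℝ := (t * (1-t)) ^ (b - a) with hc
  have hv : 0 < t * (1 - t) := by nlinarith
  have hcpos : 0 < c := rpow_pos_of_pos hv _
  have hsplit : ∀ x : ℝ, 1 ≤ x → (∫ s in (0:ℝ)..1, F x s) =
      (∫ s in (0:ℝ)..t, F x s) + (∫ s in t..(1-t), F x s) + (∫ s in (0:ℝ)..t, F x s) := by
    intro x hx
    have e1 : (∫ s in (0:ℝ)..1, F x s) =
        (∫ s in (0:ℝ)..(1-t), F x s) + ∫ s in (1-t)..1, F x s :=
      (intervalIntegral.integral_add_adjacent_intervals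
        (intF hx le_rfl (by linarith : (0:ℝ) ≤ 1 - t) h1t)
        (intF hx (by linarith) (by linarith) le_rfl)).symm
    have e2 : (∫ s in (0:ℝ)..(1-t), F x s) =
        (∫ s in (0:ℝ)..t, F x s) + ∫ s in t..(1-t), F x s :=
      (intervalIntegral.integral_add_adjacent_intervals (intF hx le_rfl ht0.le ht1')
        (intF hx ht0.le ht1 h1t)).symm
    rw [e1, e2, integral_symm x t]
  -- abbreviations
  have hAa : 0 < ∫ s in (0:ℝ)..t, F a s := by
    apply intervalIntegral.intervalIntegral_pos_of_pos_on (intF ha le_rfl ht0.le ht1') _ ht0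
    intro x hx
    exact F_pos ⟨hx.1, by linarith [hx.2]⟩
  have hAb : 0 < ∫ s in (0:ℝ)..t, F b s := by
    apply intervalIntegral.intervalIntegral_pos_of_pos_on (intF hb le_rfl ht0.le ht1') _ ht0
    intro x hx
    exact F_pos ⟨hx.1, by linarith [hx.2]⟩
  have hMa : 0 ≤ ∫ s in t..(1-t), F a s := by
    apply intervalIntegral.integral_nonneg ht1
    intro s hs
    exact F_nonneg (by linarith [hs.1]) (by linarith [hs.2])
  have hMb : 0 ≤ ∫ s in t..(1-t), F b s := by
    apply intervalIntegral.integral_nonneg ht1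
    intro s hs
    exact F_nonneg (by linarith [hs.1]) (by linarith [hs.2])
  -- key integral comparisons
  have hA : (∫ s in (0:ℝ)..t, F b s) ≤ c * ∫ s in (0:ℝ)..t, F a s := by
    rw [← intervalIntegral.integral_const_mul]
    apply intervalIntegral.integral_mono_on ht0.le (intF hb le_rfl ht0.le ht1')
      ((intF ha le_rfl ht0.le ht1').const_mul c)
    intro s hs
    have hs0 : 0 ≤ s := hs.1
    have hs1 : s ≤ 1 := by linarith [hs.2]
    rw [F_eq hs0 hs1, F_eq hs0 hs1]
    exact key_le ha hab (by nlinarith) (by nlinarith [hs.2]) hv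
  have hM : c * (∫ s in t..(1-t), F a s) ≤ ∫ s in t..(1-t), F b s := by
    rw [← intervalIntegral.integral_const_mul]
    apply intervalIntegral.integral_mono_on ht1
      ((intF ha ht0.le ht1 h1t).const_mul c)
      (intF hb ht0.le ht1 h1t)
    intro s hs
    have hs0 : 0 ≤ s := by linarith [hs.1]
    have hs1 : s ≤ 1 := by linarith [hs.2]
    rw [F_eq hs0 hs1, F_eq hs0 hs1]
    exact key_ge ha hab hv (by nlinarith [hs.1, hs.2])
  rw [hsplit a ha, hsplit b hb]
  rw [div_le_div_iff₀ (by linarith) (by linarith)]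
  nlinarith [mul_le_mul_of_nonneg_right hA hMa, mul_le_mul_of_nonneg_left hM hAa.le,
    mul_le_mul_of_nonneg_right hA hAa.le]


lemma claim1' {a b t : ℝ} (ha : 1 ≤ a) (hab : a ≤ b) (ht0 : 0 < t) (ht : t ≤ 1/2) :
    regIncBeta b b t ≤ regIncBeta a a t := by
  rw [regIncBeta, regIncBeta, if_neg (by linarith : ¬ t ≤ 0), if_neg (by linarith : ¬ (1:ℝ) ≤ t),
    if_neg (by linarith : ¬ t ≤ 0), if_neg (by linarith : ¬ (1:ℝ) ≤ t)]
  exact claim1 ha hab ht0 ht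

private def Gfun (m n : ℕ) (s : ℝ) : ℝ :=
  ∑ k ∈ Finset.Icc n m, ((m.choose k : ℝ) * s^k * (1-s)^(m-k))

private def Afun (m k : ℕ) (s : ℝ) : ℝ :=
  ((k * m.choose k : ℕ) : ℝ) * s^(k-1) * (1-s)^(m-k)

private lemma hterm (m k : ℕ) (s : ℝ) :
    HasDerivAt (fun s : ℝ => (m.choose k : ℝ) * s^k * (1-s)^(m-k))
      (Afun m k s - Afun m (k+1) s) s := by
  have h1 : HasDerivAt (fun s : ℝ => s ^ k) ((k:ℝ) * s^(k-1)) s := hasDerivAt_pow k s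
  have h2 : HasDerivAt (fun s : ℝ => (1-s)^(m-k)) (((m-k : ℕ):ℝ) * (1-s)^(m-k-1) * (-1)) s :=
    ((hasDerivAt_id s).const_sub 1).pow _
  have h3 := (h1.const_mul (m.choose k : ℝ)).fun_mul h2
  refine h3.congr_deriv (Eq.symm ?_)
  have hid : ((k+1) * m.choose (k+1) : ℕ) = (m.choose k * (m - k) : ℕ) := by
    rw [mul_comm (k+1)]
    exact Nat.choose_succ_right_eq m k
  show Afun m k s - Afun m (k+1) s = _
  rw [Afun, Afun, hid]
  simp only [Nat.add_sub_cancel, Nat.sub_sub, Nat.cast_mul]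
  ring

private lemma htel (m n : ℕ) (hnm : n ≤ m) (s : ℝ) :
    (∑ k ∈ Finset.Icc n m, (Afun m k s - Afun m (k+1) s)) = Afun m n s := by
  have hz : Afun m (m+1) s = 0 := by
    simp [Afun, Nat.choose_succ_self]
  rw [← Finset.Ico_add_one_right_eq_Icc, Finset.sum_Ico_eq_sub _ (by omega),
    Finset.sum_range_sub' (fun k => Afun m k s), Finset.sum_range_sub' (fun k => Afun m k s), hz]
  ring

private lemma hGderiv (m n : ℕ) (hnm : n ≤ m) (s : ℝ) :
    HasDerivAt (Gfun m n) (Afun m n s) s := by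
  have h := HasDerivAt.fun_sum (fun k (hk : k ∈ Finset.Icc n m) => hterm m k s)
  rw [htel m n hnm s] at h
  exact h

private lemma hG0 (m n : ℕ) (hn : 1 ≤ n) : Gfun m n 0 = 0 := by
  apply Finset.sum_eq_zero
  intro k hk
  have : k ≠ 0 := by have := (Finset.mem_Icc.mp hk).1; omega
  simp [zero_pow this]

private lemma hG1 (m n : ℕ) (hnm : n ≤ m) : Gfun m n 1 = 1 := by
  rw [Gfun, Finset.sum_eq_single m]
  · simp
  · intro k hk hne
    have hkm : m - k ≠ 0 := by
      have := (Finset.mem_Icc.mp hk).2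
      omega
    simp [zero_pow hkm, sub_self]
  · intro h
    exact absurd (Finset.mem_Icc.mpr ⟨hnm, le_refl m⟩) h

lemma claim2 {n : ℕ} (hn : 1 ≤ n) {t : ℝ} (ht0 : 0 < t) (ht : t ≤ 1/2) :
    regIncBeta (n:ℝ) (n:ℝ) t ≤ t ^ n * (4 * (1 - t)) ^ (n - 1) := by
  set m : ℕ := 2 * n - 1 with hm
  have hnm : n ≤ m := by omega
  have hK : (0:ℝ) < ((n * m.choose n : ℕ) : ℝ) := by
    have := Nat.choose_pos hnm
    positivity
  set K : ℝ := ((n * m.choose n : ℕ) : ℝ) with hKdef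
  have hAnP : ∀ s : ℝ, Afun m n s = K * (s^(n-1) * (1-s)^(n-1)) := by
    intro s
    rw [Afun, show m - n = n - 1 by omega]
    ring
  have hcont : Continuous (Afun m n) := by
    have : Continuous fun s : ℝ => K * (s^(n-1) * (1-s)^(n-1)) :=
      continuous_const.mul ((continuous_pow _).mul
        ((continuous_const.sub continuous_id).pow _))
    exact this.congr (fun s => (hAnP s).symm)
  have hint : ∀ u : ℝ, (∫ s in (0:ℝ)..u, s^(n-1) * (1-s)^(n-1)) = (Gfun m n u - Gfun m n 0) / K := by
    intro u
    have h := intervalIntegral.integral_eq_sub_of_hasDerivAt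
      (f := Gfun m n) (f' := Afun m n) (a := 0) (b := u)
      (fun x _ => hGderiv m n hnm x) (hcont.intervalIntegrable 0 u)
    rw [← h]
    rw [show (fun s:ℝ => s^(n-1)*(1-s)^(n-1)) = fun s => (Afun m n s) / K from
      funext fun s => by rw [hAnP s]; field_simp]
    rw [intervalIntegral.integral_div]
  have hcast : ((n:ℝ) - 1) = ((n-1 : ℕ) : ℝ) := by
    rw [Nat.cast_sub hn, Nat.cast_one]
  have hrp : ∀ s : ℝ, s ^ ((n:ℝ)-1) * (1-s) ^ ((n:ℝ)-1) = s^(n-1) * (1-s)^(n-1) := by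
    intro s
    rw [hcast, Real.rpow_natCast, Real.rpow_natCast]
  have ht1 : ¬ (1:ℝ) ≤ t := by linarith
  have ht0' : ¬ t ≤ 0 := by linarith
  have hreg : regIncBeta (n:ℝ) (n:ℝ) t = Gfun m n t := by
    rw [regIncBeta, if_neg ht0', if_neg ht1, betaFun]
    simp only [hrp]
    rw [hint t, hint 1, hG0 m n hn, hG1 m n hnm]
    field_simp
    ring
  rw [hreg]
  have h1t : (0:ℝ) ≤ 1 - t := by linarith
  have htt : t ≤ 1 - t := by linarith
  have hGle : Gfun m n t ≤ (∑ k ∈ Finset.Icc n m, (m.choose k : ℝ)) * (t^n * (1-t)^(n-1)) := by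
    rw [Gfun, Finset.sum_mul]
    apply Finset.sum_le_sum
    intro k hk
    obtain ⟨hk1, hk2⟩ := Finset.mem_Icc.mp hk
    rw [mul_assoc]
    apply mul_le_mul_of_nonneg_left _ (by positivity)
    calc t^k * (1-t)^(m-k) = t^n * (t^(k-n) * (1-t)^(m-k)) := by
          rw [← mul_assoc, ← pow_add]
          congr 2
          omega
      _ ≤ t^n * ((1-t)^(k-n) * (1-t)^(m-k)) := by
          apply mul_le_mul_of_nonneg_left _ (by positivity)
          exact mul_le_mul_of_nonneg_right (pow_le_pow_left₀ ht0.le htt _) (by positivity)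
      _ = t^n * (1-t)^(n-1) := by
          rw [← pow_add]
          congr 2
          omega
  have hsum : (∑ k ∈ Finset.Icc n m, (m.choose k : ℝ)) = 4^(n-1) := by
    have h1 : ∑ k ∈ Finset.range (m+1), m.choose k = 2^m := Nat.sum_range_choose m
    have h2 : ∑ k ∈ Finset.range n, m.choose k = 4^(n-1) := by
      have h := Nat.sum_range_choose_halfway (n-1)
      rw [show 2*(n-1)+1 = m by omega, show (n-1)+1 = n by omega] at h
      exact h
    have h5 : 2^m = 2 * 4^(n-1) := by
      rw [show m = 2*(n-1)+1 by omega, pow_succ, pow_mul]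
      ring
    have h4 : ∑ k ∈ Finset.Icc n m, m.choose k = 4^(n-1) := by
      have h6 := Finset.sum_range_add_sum_Ico (m.choose) (show n ≤ m+1 by omega)
      rw [← Finset.Ico_add_one_right_eq_Icc]
      omega
    rw [← Nat.cast_sum, h4]
    push_cast
    ring
  calc Gfun m n t ≤ (∑ k ∈ Finset.Icc n m, (m.choose k : ℝ)) * (t^n * (1-t)^(n-1)) := hGle
    _ = t ^ n * (4 * (1-t))^(n-1) := by
        rw [hsum, mul_pow]
        ring


end Stmt14Aux

/-- For real `δ ≥ 1`, `δ' = ⌊δ⌋ ≥ 1`, and `t ∈ [0,1/2]`,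
`I_t(δ,δ) ≤ I_t(δ',δ') ≤ t^{δ'} (4(1-t))^{δ'-1}`. -/
theorem stmt14 (δ : ℝ) (hδ : 1 ≤ δ) (t : ℝ) (ht : t ∈ Set.Icc (0:ℝ) (1/2)) :
    regIncBeta δ δ t ≤ regIncBeta (⌊δ⌋₊ : ℝ) (⌊δ⌋₊ : ℝ) t ∧
    regIncBeta (⌊δ⌋₊ : ℝ) (⌊δ⌋₊ : ℝ) t ≤ t ^ (⌊δ⌋₊) * (4*(1 - t)) ^ (⌊δ⌋₊ - 1) := by
  obtain ⟨ht0, ht2⟩ := ht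
  have hδ0 : (0:ℝ) ≤ δ := by linarith
  have hn1 : 1 ≤ ⌊δ⌋₊ := Nat.le_floor (by exact_mod_cast hδ)
  have hna : ((⌊δ⌋₊ : ℕ):ℝ) ≤ δ := Nat.floor_le hδ0
  have h1n : (1:ℝ) ≤ (⌊δ⌋₊:ℝ) := by exact_mod_cast hn1
  rcases eq_or_lt_of_le ht0 with h|h
  · subst h
    constructor
    · rw [regIncBeta, regIncBeta, if_pos le_rfl, if_pos le_rfl]
    · rw [regIncBeta, if_pos le_rfl, zero_pow (by omega : ⌊δ⌋₊ ≠ 0), zero_mul]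
  · exact ⟨Stmt14Aux.claim1' h1n hna h ht2, Stmt14Aux.claim2 hn1 h ht2⟩
end

section
/- Fix t ∈ (0, 1/2]. Then the map δ ↦ I_t(δ, δ) is decreasing in δ on [1, ∞), where I_t(δ,δ) is the Beta(δ,δ) c.d.f. at t. Consequently, for fixed n ≥ 2, the 1/n quantile κ_{n,d} of Beta((d-1)/2,(d-1)/2) is increasing in d. -/
open MeasureTheory Real Set
open scoped ENNReal NNReal

section Stmt15Aux
open intervalIntegral

private lemma contF {δ : ℝ} (h : 1 ≤ δ) :
    Continuous fun x : ℝ => x ^ (δ - 1) * (1 - x) ^ (δ - 1) :=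
  (Real.continuous_rpow_const (by linarith)).mul
    ((Real.continuous_rpow_const (by linarith)).comp (continuous_const.sub continuous_id))

private lemma contW {Δ : ℝ} (h : 0 ≤ Δ) :
    Continuous fun x : ℝ => (x * (1 - x)) ^ Δ :=
  (Real.continuous_rpow_const h).comp (continuous_id.mul (continuous_const.sub continuous_id))

private lemma fpos {δ x : ℝ} (hx : x ∈ Set.Ioo (0:ℝ) 1) :
    0 < x ^ (δ - 1) * (1 - x) ^ (δ - 1) :=
  mul_pos (Real.rpow_pos_of_pos hx.1 _) (Real.rpow_pos_of_pos (by linarith [hx.2]) _)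

/-- positivity of the partial integral -/
private lemma intpos {δ a b : ℝ} (hδ : 1 ≤ δ) (ha : 0 ≤ a) (hab : a < b) (hb : b ≤ 1) :
    0 < ∫ x in a..b, x ^ (δ - 1) * (1 - x) ^ (δ - 1) := by
  apply intervalIntegral_pos_of_pos_on ((contF hδ).intervalIntegrable a b)
  · intro x hx
    exact fpos ⟨lt_of_le_of_lt ha hx.1, lt_of_lt_of_le hx.2 hb⟩
  · exact hab

/-- split a symmetric function's integral -/
private lemma symm_split {g : ℝ → ℝ} (hg : Continuous g) (hsym : ∀ x, g (1 - x) = g x)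
    (t : ℝ) :
    ∫ x in (0:ℝ)..1, g x = 2 * (∫ x in (0:ℝ)..t, g x) + ∫ x in t..(1-t), g x := by
  have h1 : ∫ x in (1-t)..1, g x = ∫ x in (0:ℝ)..t, g x := by
    have h := intervalIntegral.integral_comp_sub_left (a := (0:ℝ)) (b := t) g 1
    simp only [hsym, sub_zero] at h
    exact h.symm
  have h2 : (∫ x in (0:ℝ)..t, g x) + ∫ x in t..(1-t), g x = ∫ x in (0:ℝ)..(1-t), g x :=
    integral_add_adjacent_intervals (hg.intervalIntegrable _ _) (hg.intervalIntegrable _ _)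
  have h3 : (∫ x in (0:ℝ)..(1-t), g x) + ∫ x in (1-t)..1, g x = ∫ x in (0:ℝ)..1, g x :=
    integral_add_adjacent_intervals (hg.intervalIntegrable _ _) (hg.intervalIntegrable _ _)
  rw [← h3, ← h2, h1]; ring

private lemma main_mono {t δ₁ δ₂ : ℝ} (ht : t ∈ Set.Ioc (0:ℝ) (1/2)) (h1 : 1 ≤ δ₁)
    (h12 : δ₁ ≤ δ₂) : regIncBeta δ₂ δ₂ t ≤ regIncBeta δ₁ δ₁ t := by
  obtain ⟨ht0, ht2⟩ := ht
  have h2 : 1 ≤ δ₂ := h1.trans h12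
  have hΔ : 0 ≤ δ₂ - δ₁ := by linarith
  set Δ := δ₂ - δ₁ with hΔdef
  set f₁ : ℝ → ℝ := fun x => x ^ (δ₁ - 1) * (1 - x) ^ (δ₁ - 1) with hf₁
  set w : ℝ → ℝ := fun x => (x * (1 - x)) ^ Δ with hw
  -- pointwise factorisation on [0,1]
  have heq : ∀ x ∈ Set.Icc (0:ℝ) 1,
      x ^ (δ₂ - 1) * (1 - x) ^ (δ₂ - 1) = f₁ x * w x := by
    intro x hx
    have hx0 : (0:ℝ) ≤ x := hx.1
    have hx1 : (0:ℝ) ≤ 1 - x := by linarith [hx.2]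
    have hwx : w x = x ^ Δ * (1 - x) ^ Δ := Real.mul_rpow hx0 hx1
    by_cases hδ : δ₂ = 1
    · have hδ1 : δ₁ = 1 := le_antisymm (by linarith) h1
      simp [hf₁, hw, hδ, hδ1, hΔdef, Real.rpow_zero]
    · have he : δ₂ - 1 = (δ₁ - 1) + Δ := by ring
      have hne : (δ₁ - 1) + Δ ≠ 0 := by rw [← he]; exact sub_ne_zero.2 hδ
      rw [hwx, he, Real.rpow_add' hx0 hne, Real.rpow_add' hx1 hne, hf₁]
      ring
  -- rewrite the δ₂-integrals
  have hsub1 : Set.uIcc (0:ℝ) t ⊆ Set.Icc 0 1 := by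
    rw [Set.uIcc_of_le ht0.le]; exact Set.Icc_subset_Icc le_rfl (by linarith)
  have hsub2 : Set.uIcc (0:ℝ) 1 ⊆ Set.Icc 0 1 := by rw [Set.uIcc_of_le zero_le_one]
  have hit : ∫ s in (0:ℝ)..t, s ^ (δ₂ - 1) * (1 - s) ^ (δ₂ - 1)
      = ∫ s in (0:ℝ)..t, f₁ s * w s :=
    intervalIntegral.integral_congr fun x hx => heq x (hsub1 hx)
  have hib : betaFun δ₂ δ₂ = ∫ s in (0:ℝ)..1, f₁ s * w s :=
    intervalIntegral.integral_congr fun x hx => heq x (hsub2 hx)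
  -- symmetry
  have hsymf : ∀ x, f₁ (1 - x) = f₁ x := by
    intro x; simp only [hf₁, sub_sub_cancel]; ring
  have hsymw : ∀ x, w (1 - x) = w x := by
    intro x; simp only [hw, sub_sub_cancel]; ring_nf
  have hcf : Continuous f₁ := contF h1
  have hcw : Continuous w := contW hΔ
  have hcfw : Continuous fun x => f₁ x * w x := hcf.mul hcw
  -- the pieces
  set A := ∫ x in (0:ℝ)..t, f₁ x with hA
  set M := ∫ x in t..(1-t), f₁ x with hM
  set A' := ∫ x in (0:ℝ)..t, f₁ x * w x with hA'
  set M' := ∫ x in t..(1-t), f₁ x * w x with hM'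
  have hB1 : betaFun δ₁ δ₁ = 2 * A + M := symm_split hcf hsymf t
  have hB2 : betaFun δ₂ δ₂ = 2 * A' + M' := by
    rw [hib]; exact symm_split hcfw (fun x => by rw [hsymf, hsymw]) t
  have hApos : 0 < A := intpos h1 le_rfl ht0 (by linarith)
  have ht1t : t ≤ 1 - t := by linarith
  have hwt : 0 < w t := Real.rpow_pos_of_pos (by nlinarith) _
  -- A' ≤ w t * A
  have hA'le : A' ≤ w t * A := by
    rw [hA, ← intervalIntegral.integral_const_mul]
    apply intervalIntegral.integral_mono_on ht0.le (hcfw.intervalIntegrable _ _)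
      ((continuous_const.mul hcf).intervalIntegrable _ _)
    intro x hx
    have hf1nn : 0 ≤ f₁ x := by
      apply mul_nonneg (Real.rpow_nonneg hx.1 _) (Real.rpow_nonneg (by linarith [hx.2]) _)
    have hwle : w x ≤ w t :=
      Real.rpow_le_rpow (by nlinarith [hx.1, hx.2]) (by nlinarith [hx.1, hx.2]) hΔ
    calc f₁ x * w x ≤ f₁ x * w t := mul_le_mul_of_nonneg_left hwle hf1nn
      _ = w t * f₁ x := mul_comm _ _
  -- w t * M ≤ M'
  have hM'ge : w t * M ≤ M' := by
    rw [hM, ← intervalIntegral.integral_const_mul]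
    apply intervalIntegral.integral_mono_on ht1t
      ((continuous_const.mul hcf).intervalIntegrable _ _) (hcfw.intervalIntegrable _ _)
    intro x hx
    have hf1nn : 0 ≤ f₁ x := by
      apply mul_nonneg (Real.rpow_nonneg (by linarith [hx.1]) _)
        (Real.rpow_nonneg (by nlinarith [hx.2]) _)
    have hwle : w t ≤ w x :=
      Real.rpow_le_rpow (by nlinarith) (by nlinarith [hx.1, hx.2]) hΔ
    calc w t * f₁ x = f₁ x * w t := mul_comm _ _
      _ ≤ f₁ x * w x := mul_le_mul_of_nonneg_left hwle hf1nn
  have hMnn : 0 ≤ M := by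
    apply intervalIntegral.integral_nonneg ht1t
    intro x hx
    exact mul_nonneg (Real.rpow_nonneg (by linarith [hx.1]) _)
      (Real.rpow_nonneg (by nlinarith [hx.2]) _)
  have hA'pos : 0 < A' := by
    apply intervalIntegral_pos_of_pos_on (hcfw.intervalIntegrable _ _) _ ht0
    intro x hx
    have : x ∈ Set.Ioo (0:ℝ) 1 := ⟨hx.1, by linarith [hx.2]⟩
    exact mul_pos (fpos this)
      (Real.rpow_pos_of_pos (mul_pos this.1 (by linarith [this.2])) _)
  have hM'nn : 0 ≤ M' := le_trans (mul_nonneg hwt.le hMnn) hM'ge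
  -- conclude
  rw [regIncBeta, regIncBeta, if_neg (by linarith), if_neg (by linarith),
    if_neg (by linarith), if_neg (by linarith), hit, hB2, hB1]
  rw [div_le_div_iff₀ (by linarith) (by linarith)]
  nlinarith [mul_le_mul_of_nonneg_right hA'le hMnn, mul_le_mul_of_nonneg_left hM'ge hApos.le,
    mul_pos hApos hA'pos]

private lemma strict_mono_x {δ a b : ℝ} (hδ : 1 ≤ δ) (ha : 0 < a) (hab : a < b)
    (hb : b ≤ 1/2) : regIncBeta δ δ a < regIncBeta δ δ b := by
  have hB : 0 < betaFun δ δ := by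
    unfold betaFun; exact intpos hδ le_rfl one_pos le_rfl
  rw [regIncBeta, regIncBeta, if_neg (by linarith), if_neg (by linarith),
    if_neg (by linarith), if_neg (by linarith)]
  rw [div_lt_div_iff_of_pos_right hB]
  have hsplit : (∫ s in (0:ℝ)..a, s ^ (δ - 1) * (1 - s) ^ (δ - 1))
      + ∫ s in a..b, s ^ (δ - 1) * (1 - s) ^ (δ - 1)
      = ∫ s in (0:ℝ)..b, s ^ (δ - 1) * (1 - s) ^ (δ - 1) :=
    intervalIntegral.integral_add_adjacent_intervals
      ((contF hδ).intervalIntegrable _ _) ((contF hδ).intervalIntegrable _ _)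
  have := intpos hδ ha.le hab (by linarith)
  linarith

end Stmt15Aux

/-- For fixed `t ∈ (0,1/2]`, `δ ↦ I_t(δ,δ)` is decreasing on `[1,∞)`;
consequently, for fixed `n ≥ 2`, the `1/n` quantile `κ_{n,d}` of
`Beta((d-1)/2,(d-1)/2)` is increasing in `d` (for `d ≥ 3`). -/
theorem stmt15 :
    (∀ t ∈ Set.Ioc (0:ℝ) (1/2), ∀ δ₁ δ₂ : ℝ, 1 ≤ δ₁ → δ₁ ≤ δ₂ →
      regIncBeta δ₂ δ₂ t ≤ regIncBeta δ₁ δ₁ t) ∧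
    (∀ n : ℕ, 2 ≤ n → ∀ d₁ d₂ : ℕ, 3 ≤ d₁ → d₁ ≤ d₂ →
      ∀ κ₁ κ₂ : ℝ, κ₁ ∈ Set.Ioc (0:ℝ) (1/2) → κ₂ ∈ Set.Ioc (0:ℝ) (1/2) →
        regIncBeta (((d₁:ℝ) - 1)/2) (((d₁:ℝ) - 1)/2) κ₁ = 1/(n:ℝ) →
        regIncBeta (((d₂:ℝ) - 1)/2) (((d₂:ℝ) - 1)/2) κ₂ = 1/(n:ℝ) →
        κ₁ ≤ κ₂) := by
  constructor
  · intro t ht δ₁ δ₂ h1 h12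
    exact main_mono ht h1 h12
  · intro n hn d₁ d₂ hd1 hdd κ₁ κ₂ hκ1 hκ2 he1 he2
    by_contra hcon
    push_neg at hcon
    have hδ1 : (1:ℝ) ≤ ((d₁:ℝ) - 1)/2 := by
      have h3 : (3:ℝ) ≤ (d₁:ℝ) := by exact_mod_cast hd1
      linarith
    have hδ12 : ((d₁:ℝ) - 1)/2 ≤ ((d₂:ℝ) - 1)/2 := by
      have h3 : (d₁:ℝ) ≤ (d₂:ℝ) := by exact_mod_cast hdd
      linarith
    have hlt : regIncBeta (((d₂:ℝ) - 1)/2) (((d₂:ℝ) - 1)/2) κ₂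
        < regIncBeta (((d₂:ℝ) - 1)/2) (((d₂:ℝ) - 1)/2) κ₁ :=
      strict_mono_x (hδ1.trans hδ12) hκ2.1 hcon hκ1.2
    have hle : regIncBeta (((d₂:ℝ) - 1)/2) (((d₂:ℝ) - 1)/2) κ₁
        ≤ regIncBeta (((d₁:ℝ) - 1)/2) (((d₁:ℝ) - 1)/2) κ₁ :=
      main_mono hκ1 hδ1 hδ12
    rw [he1] at hle
    rw [he2] at hlt
    linarith
end

section
/- Let d ≥ 3, δ = (d-1)/2, δ' = ⌊δ⌋, n ≥ 2, and let κ_{n,d} ∈ (0, 1/2] satisfy I_{κ_{n,d}}(δ,δ) = 1/n. Then (1/2)[1 - √(1 - (2/n)^{1/(δ'-1)})] ≤ κ_{n,d} ≤ (1/2)[1 - √(max(0, 1 - 4 c_d n^{-1/δ}))], where c_d = [δ B(δ,δ)]^{1/δ}. -/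
open MeasureTheory Real Set
open scoped ENNReal NNReal

lemma aux_cont1 {δ : ℝ} (hδ : 1 ≤ δ) : Continuous (fun s : ℝ => s ^ (δ-1)) := by
  rw [continuous_iff_continuousAt]; intro x
  exact Real.continuousAt_rpow_const x _ (Or.inr (by linarith))

lemma aux_cont {δ : ℝ} (hδ : 1 ≤ δ) : Continuous (fun s : ℝ => s ^ (δ-1) * (1-s) ^ (δ-1)) :=
  (aux_cont1 hδ).mul ((aux_cont1 hδ).comp (continuous_const.sub continuous_id))

lemma aux_beta_pos {δ : ℝ} (hδ : 1 ≤ δ) : 0 < betaFun δ δ := by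
  rw [betaFun]
  apply intervalIntegral.intervalIntegral_pos_of_pos_on ((aux_cont hδ).intervalIntegrable 0 1)
  · intro x hx
    exact mul_pos (Real.rpow_pos_of_pos hx.1 _)
      (Real.rpow_pos_of_pos (by linarith [hx.2]) _)
  · norm_num

lemma aux_half {δ : ℝ} (hδ : 1 ≤ δ) :
    (∫ s in (0:ℝ)..(1/2), s ^ (δ-1) * (1-s) ^ (δ-1)) = betaFun δ δ / 2 := by
  have h2 := intervalIntegral.integral_comp_sub_left
    (a := (0:ℝ)) (b := 1/2) (fun s : ℝ => s ^ (δ-1) * (1-s) ^ (δ-1)) 1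
  norm_num at h2
  have h3 : (∫ x in (0:ℝ)..(1/2), (1-x) ^ (δ-1) * x ^ (δ-1))
      = ∫ x in (0:ℝ)..(1/2), x ^ (δ-1) * (1-x) ^ (δ-1) := by
    apply intervalIntegral.integral_congr
    intro x _
    exact mul_comm _ _
  have hadd := intervalIntegral.integral_add_adjacent_intervals
    ((aux_cont hδ).intervalIntegrable (μ := volume) 0 (1/2))
    ((aux_cont hδ).intervalIntegrable (μ := volume) (1/2) 1)
  rw [betaFun]
  rw [h3] at h2
  linarith [hadd]

lemma aux_lowint {δ κ : ℝ} (hδ : 1 ≤ δ) (hκ0 : 0 < κ) (hκh : κ ≤ 1/2) :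
    (κ*(1-κ)) ^ δ / δ ≤ ∫ s in (0:ℝ)..κ, s ^ (δ-1) * (1-s) ^ (δ-1) := by
  have hδ0 : (0:ℝ) < δ := by linarith
  have h1 : (∫ s in (0:ℝ)..κ, s ^ (δ-1) * (1-κ) ^ (δ-1))
      ≤ ∫ s in (0:ℝ)..κ, s ^ (δ-1) * (1-s) ^ (δ-1) := by
    apply intervalIntegral.integral_mono_on hκ0.le
    · exact ((aux_cont1 hδ).mul continuous_const).intervalIntegrable 0 κ
    · exact (aux_cont hδ).intervalIntegrable 0 κ
    · intro s hs
      have h1s : (1-κ) ^ (δ-1) ≤ (1-s) ^ (δ-1) :=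
        Real.rpow_le_rpow (by linarith) (by linarith [hs.2]) (by linarith)
      exact mul_le_mul_of_nonneg_left h1s (Real.rpow_nonneg hs.1 _)
  have h2 : (∫ s in (0:ℝ)..κ, s ^ (δ-1) * (1-κ) ^ (δ-1))
      = κ ^ δ / δ * (1-κ) ^ (δ-1) := by
    rw [intervalIntegral.integral_mul_const, integral_rpow (Or.inl (by linarith))]
    rw [Real.zero_rpow (by linarith : δ - 1 + 1 ≠ 0)]
    ring_nf
  have h3 : (κ*(1-κ)) ^ δ / δ ≤ κ ^ δ / δ * (1-κ) ^ (δ-1) := by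
    rw [Real.mul_rpow hκ0.le (by linarith)]
    have : (1-κ) ^ δ ≤ (1-κ) ^ (δ-1) :=
      Real.rpow_le_rpow_of_exponent_ge (by linarith) (by linarith) (by linarith)
    have hκδ : 0 ≤ κ ^ δ := Real.rpow_nonneg hκ0.le _
    calc κ ^ δ * (1-κ) ^ δ / δ ≤ κ ^ δ * (1-κ) ^ (δ-1) / δ := by
            gcongr
      _ = κ ^ δ / δ * (1-κ) ^ (δ-1) := by ring
  linarith

lemma aux_subst {δ κ : ℝ} (hδ : 1 ≤ δ) (hκ0 : 0 < κ) (hκh : κ < 1/2) :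
    (∫ s in (0:ℝ)..κ, s ^ (δ-1) * (1-s) ^ (δ-1)) ≤
      (4*κ*(1-κ)) ^ δ * ∫ s in (0:ℝ)..(1/2), s ^ (δ-1) * (1-s) ^ (δ-1) := by
  set c : ℝ := 4*κ*(1-κ) with hcdef
  have hc0 : 0 < c := by nlinarith
  have hc1 : c < 1 := by nlinarith [sq_nonneg (1-2*κ)]
  set h : ℝ → ℝ := fun u => 1 - 4*c*(u*(1-u)) with hhdef
  have hpos : ∀ u : ℝ, 0 < h u := by
    intro u
    show 0 < 1 - 4*c*(u*(1-u))
    nlinarith [sq_nonneg (1-2*u), mul_nonneg hc0.le (sq_nonneg (1-2*u))]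
  set φ : ℝ → ℝ := fun u => (1 - Real.sqrt (h u))/2 with hφdef
  set φ' : ℝ → ℝ := fun u => c*(1-2*u)/Real.sqrt (h u) with hφ'def
  have hhderiv : ∀ u : ℝ, HasDerivAt h (-(4*c)*(1-2*u)) u := by
    intro u
    have h1 : HasDerivAt (fun u:ℝ => u*(1-u)) (1-2*u) u := by
      have := (hasDerivAt_id u).mul ((hasDerivAt_const u (1:ℝ)).sub (hasDerivAt_id u))
      exact this.congr_deriv (by simp only [id_eq, Pi.sub_apply]; ring)
    have := (h1.const_mul (4*c)).const_sub 1
    exact this.congr_deriv (by ring)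
  have hderiv : ∀ u : ℝ, HasDerivAt φ (φ' u) u := by
    intro u
    have hsqrtpos : 0 < Real.sqrt (h u) := Real.sqrt_pos.2 (hpos u)
    have h2 := ((hhderiv u).sqrt (hpos u).ne').const_sub 1 |>.div_const 2
    refine h2.congr_deriv ?_
    rw [hφ'def]
    field_simp
    ring
  have hsqrtcont : Continuous (fun u => Real.sqrt (h u)) :=
    Real.continuous_sqrt.comp (by fun_prop)
  have hφ'cont : Continuous φ' := by
    apply Continuous.div (by fun_prop) hsqrtcont
    intro u; exact (Real.sqrt_pos.2 (hpos u)).ne'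
  have hφcont : Continuous φ := by fun_prop
  have hsub := intervalIntegral.integral_comp_smul_deriv (a := (0:ℝ)) (b := 1/2)
    (f := φ) (f' := φ') (g := fun s : ℝ => s ^ (δ-1) * (1-s) ^ (δ-1))
    (fun x _ => hderiv x) hφ'cont.continuousOn (aux_cont hδ)
  have hφ0 : φ 0 = 0 := by
    simp [hφdef, hhdef, Real.sqrt_one]
  have hφhalf : φ (1/2) = κ := by
    have h12 : h (1/2) = (1-2*κ)^2 := by rw [hhdef, hcdef]; ring_nf
    rw [hφdef]; simp only [h12]
    rw [Real.sqrt_sq (by linarith)]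
    ring
  rw [hφ0, hφhalf] at hsub
  rw [← hsub]
  have hmono : (∫ x in (0:ℝ)..(1/2), φ' x • ((fun s : ℝ => s ^ (δ-1) * (1-s) ^ (δ-1)) ∘ φ) x)
      ≤ ∫ u in (0:ℝ)..(1/2), c ^ δ * (u ^ (δ-1) * (1-u) ^ (δ-1)) := by
    apply intervalIntegral.integral_mono_on (by norm_num)
    · exact (hφ'cont.smul ((aux_cont hδ).comp hφcont)).intervalIntegrable (μ := volume) 0 (1/2)
    · exact (continuous_const.mul (aux_cont hδ)).intervalIntegrable (μ := volume) 0 (1/2)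
    · intro u hu
      obtain ⟨hu0, hu2⟩ := hu
      have huu : 0 ≤ u * (1-u) := by nlinarith
      have hh1 : h u ≤ 1 := by
        rw [hhdef]; simp only
        nlinarith
      have hsq : Real.sqrt (h u) ≤ 1 := by
        rw [show (1:ℝ) = Real.sqrt 1 by rw [Real.sqrt_one]]
        exact Real.sqrt_le_sqrt hh1
      have hsq0 : 0 ≤ Real.sqrt (h u) := Real.sqrt_nonneg _
      have hφmem : 0 ≤ φ u ∧ φ u ≤ 1/2 := by
        constructor <;> (rw [hφdef]; simp only) <;> linarith
      have hkey : φ u * (1 - φ u) = c * (u * (1-u)) := by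
        have e1 : φ u * (1 - φ u) = (1 - Real.sqrt (h u) ^ 2)/4 := by
          rw [hφdef]; ring
        rw [e1, Real.sq_sqrt (hpos u).le, hhdef]; ring
      have hgφ : ((fun s : ℝ => s ^ (δ-1) * (1-s) ^ (δ-1)) ∘ φ) u
          = c ^ (δ-1) * (u ^ (δ-1) * (1-u) ^ (δ-1)) := by
        show (φ u) ^ (δ-1) * (1 - φ u) ^ (δ-1) = _
        rw [← Real.mul_rpow hφmem.1 (by linarith [hφmem.2]), hkey,
          Real.mul_rpow hc0.le huu, Real.mul_rpow hu0 (by linarith)]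
      have hφ'le : φ' u ≤ c := by
        rw [hφ'def]; simp only
        have hgeq : (1-2*u)^2 ≤ h u := by
          rw [hhdef]; simp only; nlinarith
        have : (1:ℝ) - 2*u ≤ Real.sqrt (h u) := by
          rw [show (1:ℝ)-2*u = Real.sqrt ((1-2*u)^2) from (Real.sqrt_sq (by linarith)).symm]
          exact Real.sqrt_le_sqrt hgeq
        rw [div_le_iff₀ (Real.sqrt_pos.2 (hpos u))]
        nlinarith
      have hrhs0 : 0 ≤ c ^ (δ-1) * (u ^ (δ-1) * (1-u) ^ (δ-1)) := by
        apply mul_nonneg (Real.rpow_nonneg hc0.le _)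
        exact mul_nonneg (Real.rpow_nonneg hu0 _) (Real.rpow_nonneg (by linarith) _)
      rw [smul_eq_mul, hgφ]
      calc φ' u * (c ^ (δ-1) * (u ^ (δ-1) * (1-u) ^ (δ-1)))
          ≤ c * (c ^ (δ-1) * (u ^ (δ-1) * (1-u) ^ (δ-1))) :=
            mul_le_mul_of_nonneg_right hφ'le hrhs0
        _ = c ^ δ * (u ^ (δ-1) * (1-u) ^ (δ-1)) := by
            rw [show δ = 1 + (δ-1) by ring, Real.rpow_add hc0, Real.rpow_one]
            ring
  calc (∫ x in (0:ℝ)..(1/2), φ' x • ((fun s : ℝ => s ^ (δ-1) * (1-s) ^ (δ-1)) ∘ φ) x)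
      ≤ ∫ u in (0:ℝ)..(1/2), c ^ δ * (u ^ (δ-1) * (1-u) ^ (δ-1)) := hmono
    _ = c ^ δ * ∫ u in (0:ℝ)..(1/2), u ^ (δ-1) * (1-u) ^ (δ-1) :=
        intervalIntegral.integral_const_mul _ _

/-- For `d ≥ 3` (the lower bound requiring `δ' = ⌊δ⌋ ≥ 2`, i.e. `d ≥ 5`),
`δ = (d-1)/2`, `n ≥ 2`, and `κ_{n,d} ∈ (0,1/2]` with `I_{κ_{n,d}}(δ,δ) = 1/n`, one has
`(1/2)[1 - √(1-(2/n)^{1/(δ'-1)})] ≤ κ_{n,d} ≤ (1/2)[1 - √(max(0, 1 - 4 c_d n^{-1/δ}))]`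
where `c_d = (δ B(δ,δ))^{1/δ}`. -/
theorem stmt16 (d n : ℕ) (hd : 3 ≤ d) (hd5 : 5 ≤ d) (hn : 2 ≤ n)
    (δ : ℝ) (hδ : δ = ((d:ℝ) - 1)/2) (δ' : ℕ) (hδ' : δ' = ⌊δ⌋₊)
    (κ : ℝ) (hκmem : κ ∈ Set.Ioc (0:ℝ) (1/2)) (hκ : regIncBeta δ δ κ = 1/(n:ℝ)) :
    (1/2) * (1 - Real.sqrt (1 - (2/(n:ℝ)) ^ ((1:ℝ)/((δ':ℝ) - 1)))) ≤ κ ∧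
    κ ≤ (1/2) * (1 - Real.sqrt (max 0
      (1 - 4 * (δ * betaFun δ δ) ^ ((1:ℝ)/δ) * (n:ℝ) ^ (-(1:ℝ)/δ)))) := by
  obtain ⟨hκ0, hκhalf⟩ := hκmem
  have hd5' : (5:ℝ) ≤ (d:ℝ) := by exact_mod_cast hd5
  have hδ2 : (2:ℝ) ≤ δ := by rw [hδ]; linarith
  have hδ1 : (1:ℝ) ≤ δ := by linarith
  have hδ0 : (0:ℝ) < δ := by linarith
  have hn2 : (2:ℝ) ≤ (n:ℝ) := by exact_mod_cast hn
  have hn0 : (0:ℝ) < (n:ℝ) := by linarith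
  have hB := aux_beta_pos hδ1
  rw [regIncBeta, if_neg (not_le.2 hκ0), if_neg (by push_neg; linarith)] at hκ
  have hint : (∫ s in (0:ℝ)..κ, s ^ (δ-1) * (1-s) ^ (δ-1)) = betaFun δ δ / n := by
    rw [div_eq_div_iff hB.ne' hn0.ne'] at hκ
    rw [eq_div_iff hn0.ne']
    linarith [hκ]
  constructor
  · -- lower bound
    by_cases hhalf : κ = 1/2
    · have := Real.sqrt_nonneg (1 - (2/(n:ℝ)) ^ ((1:ℝ)/((δ':ℝ) - 1)))
      rw [hhalf]; linarith
    · have hκlt : κ < 1/2 := lt_of_le_of_ne hκhalf hhalf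
      have hs := aux_subst hδ1 hκ0 hκlt
      rw [hint, aux_half hδ1] at hs
      set c : ℝ := 4*κ*(1-κ) with hcdef
      have hc0 : 0 < c := by nlinarith
      have hc1 : c ≤ 1 := by nlinarith [sq_nonneg (1-2*κ)]
      have h2n : 2/(n:ℝ) ≤ c ^ δ := by
        rw [div_le_iff₀ hn0] at hs
        rw [div_le_iff₀ hn0]
        nlinarith [hB]
      have hcδ : (2/(n:ℝ)) ^ ((1:ℝ)/δ) ≤ c := by
        have h1 := Real.rpow_le_rpow (by positivity) h2n (by positivity : (0:ℝ) ≤ 1/δ)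
        rwa [← Real.rpow_mul hc0.le, mul_one_div_cancel hδ0.ne', Real.rpow_one] at h1
      have hδ'2 : 2 ≤ δ' := by
        rw [hδ']; exact Nat.le_floor (by exact_mod_cast hδ2)
      have hδ'2' : (2:ℝ) ≤ (δ':ℝ) := by exact_mod_cast hδ'2
      have hδ'le : (δ':ℝ) ≤ δ := by
        rw [hδ']; exact_mod_cast Nat.floor_le (by linarith : (0:ℝ) ≤ δ)
      have he : (2/(n:ℝ)) ^ ((1:ℝ)/((δ':ℝ)-1)) ≤ (2/(n:ℝ)) ^ ((1:ℝ)/δ) := by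
        apply Real.rpow_le_rpow_of_exponent_ge (by positivity)
          (by rw [div_le_one hn0]; linarith)
        exact one_div_le_one_div_of_le (by linarith) (by linarith)
      have hec : (2/(n:ℝ)) ^ ((1:ℝ)/((δ':ℝ)-1)) ≤ c := he.trans hcδ
      have hfin : 1 - 2*κ ≤ Real.sqrt (1 - (2/(n:ℝ)) ^ ((1:ℝ)/((δ':ℝ)-1))) := by
        rw [show (1:ℝ)-2*κ = Real.sqrt ((1-2*κ)^2) from (Real.sqrt_sq (by linarith)).symm]
        apply Real.sqrt_le_sqrt
        nlinarith [hec]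
      linarith
  · -- upper bound
    have hlow := aux_lowint hδ1 hκ0 hκhalf
    rw [hint] at hlow
    have hx0 : (0:ℝ) ≤ κ*(1-κ) := by nlinarith
    have h1 : (κ*(1-κ))^δ ≤ δ * betaFun δ δ / n := by
      rw [div_le_div_iff₀ hδ0 hn0] at hlow
      rw [le_div_iff₀ hn0]
      linarith
    have h3 := Real.rpow_le_rpow (Real.rpow_nonneg hx0 δ) h1
      (le_of_lt (by positivity : (0:ℝ) < 1/δ))
    rw [← Real.rpow_mul hx0, mul_one_div_cancel hδ0.ne', Real.rpow_one] at h3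
    have hrw : (δ * betaFun δ δ / n) ^ ((1:ℝ)/δ)
        = (δ * betaFun δ δ) ^ ((1:ℝ)/δ) * (n:ℝ) ^ (-(1:ℝ)/δ) := by
      rw [div_eq_mul_inv, Real.mul_rpow (by positivity) (by positivity),
        Real.inv_rpow hn0.le, ← Real.rpow_neg hn0.le, neg_div]
    rw [hrw] at h3
    rw [mul_assoc 4]
    obtain ⟨P, hP⟩ : ∃ P, (δ * betaFun δ δ) ^ ((1:ℝ)/δ) * (n:ℝ) ^ (-(1:ℝ)/δ) = P := ⟨_, rfl⟩
    rw [hP] at h3 ⊢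
    have hsq' : 1 - 4*P ≤ (1-2*κ)^2 := by
      have hexp : (1-2*κ)^2 = 1 - 4*(κ*(1-κ)) := by ring
      linarith [h3]
    have hM : max 0 (1 - 4*P) ≤ (1-2*κ)^2 := max_le (sq_nonneg _) hsq'
    have hfin : Real.sqrt (max 0 (1 - 4*P)) ≤ 1-2*κ := by
      rw [show (1:ℝ)-2*κ = Real.sqrt ((1-2*κ)^2) from (Real.sqrt_sq (by linarith)).symm]
      exact Real.sqrt_le_sqrt hM
    linarith
end

section
/- Let κ_{n,d} be the 1/n quantile of the Beta(δ,δ) distribution with δ = (d-1)/2, d ≥ 3. If n = n(d) satisfies n = C λ^d (1 + o(1)) as d → ∞ for constants λ > 1 and C > 0, then κ_{n,d} → (1/2)[1 - √(1 - 1/λ²)] as d → ∞. -/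
open MeasureTheory Real Set
open scoped ENNReal NNReal

section helpers
variable {p : ℝ}

lemma fcont (hp : 0 ≤ p) : Continuous (fun s : ℝ => s ^ p * (1 - s) ^ p) :=
  (Real.continuous_rpow_const hp).mul
    ((Real.continuous_rpow_const hp).comp (continuous_const.sub continuous_id))

lemma fint (hp : 0 ≤ p) (a b : ℝ) :
    IntervalIntegrable (fun s : ℝ => s ^ p * (1 - s) ^ p) volume a b :=
  (fcont hp).intervalIntegrable a b

lemma f_eq (hp : 0 ≤ p) {s : ℝ} (h0 : 0 ≤ s) (h1 : s ≤ 1) :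
    s ^ p * (1 - s) ^ p = (s * (1 - s)) ^ p :=
  (Real.mul_rpow h0 (by linarith)).symm

lemma int_upper (hp : 0 ≤ p) {t : ℝ} (ht0 : 0 ≤ t) (ht : t ≤ 1/2) :
    (∫ s in (0:ℝ)..t, s ^ p * (1 - s) ^ p) ≤ t * (t * (1 - t)) ^ p := by
  have h := intervalIntegral.integral_mono_on (μ := volume) (a := 0) (b := t)
    ht0 (fint hp 0 t) (intervalIntegrable_const (c := (t * (1 - t)) ^ p))
    (fun s hs => by
      rcases hs with ⟨hs0, hs1⟩
      rw [f_eq hp hs0 (by linarith)]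
      exact Real.rpow_le_rpow (mul_nonneg hs0 (by linarith)) (by nlinarith) hp)
  simpa [smul_eq_mul] using h

lemma int_lower (hp : 0 ≤ p) {a b : ℝ} (h0 : 0 ≤ a) (hab : a ≤ b) (hb : b ≤ 1/2) :
    (b - a) * (a * (1 - a)) ^ p ≤ ∫ s in a..b, s ^ p * (1 - s) ^ p := by
  have h := intervalIntegral.integral_mono_on (μ := volume) (a := a) (b := b)
    hab (intervalIntegrable_const (c := (a * (1 - a)) ^ p)) (fint hp a b)
    (fun s hs => by
      rcases hs with ⟨hs0, hs1⟩
      rw [f_eq hp (le_trans h0 hs0) (by linarith)]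
      exact Real.rpow_le_rpow (mul_nonneg h0 (by linarith)) (by nlinarith) hp)
  simpa [smul_eq_mul] using h

lemma int_nonneg (hp : 0 ≤ p) {a b : ℝ} (h0 : 0 ≤ a) (hab : a ≤ b) (hb : b ≤ 1) :
    0 ≤ ∫ s in a..b, s ^ p * (1 - s) ^ p :=
  intervalIntegral.integral_nonneg hab (fun u hu =>
    mul_nonneg (Real.rpow_nonneg (le_trans h0 hu.1) p)
      (Real.rpow_nonneg (by linarith [hu.2] : (0:ℝ) ≤ 1 - u) p))

lemma int_mono (hp : 0 ≤ p) {a b : ℝ} (h0 : 0 ≤ a) (hab : a ≤ b) (hb : b ≤ 1) :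
    (∫ s in (0:ℝ)..a, s ^ p * (1 - s) ^ p) ≤ ∫ s in (0:ℝ)..b, s ^ p * (1 - s) ^ p := by
  rw [← intervalIntegral.integral_add_adjacent_intervals (fint hp 0 a) (fint hp a b)]
  have := int_nonneg hp h0 hab hb
  linarith

lemma int_sub (hp : 0 ≤ p) {a b : ℝ} (h0 : 0 ≤ a) (hab : a ≤ b) (hb : b ≤ 1) :
    (∫ s in a..b, s ^ p * (1 - s) ^ p) ≤ ∫ s in (0:ℝ)..1, s ^ p * (1 - s) ^ p := by
  rw [← intervalIntegral.integral_add_adjacent_intervals (fint hp 0 a) (fint hp a 1),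
      ← intervalIntegral.integral_add_adjacent_intervals (fint hp a b) (fint hp b 1)]
  have h1 := int_nonneg hp (le_refl (0:ℝ)) h0 (by linarith)
  have h2 := int_nonneg hp (le_trans h0 hab) hb (le_refl (1:ℝ))
  linarith

lemma beta_le (hp : 0 ≤ p) :
    (∫ s in (0:ℝ)..1, s ^ p * (1 - s) ^ p) ≤ (1/4 : ℝ) ^ p := by
  have h := intervalIntegral.integral_mono_on (μ := volume) (a := (0:ℝ)) (b := 1)
    (by norm_num) (fint hp 0 1) (intervalIntegrable_const (c := ((1:ℝ)/4) ^ p))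
    (fun s hs => by
      rcases hs with ⟨hs0, hs1⟩
      rw [f_eq hp hs0 hs1]
      exact Real.rpow_le_rpow (mul_nonneg hs0 (by linarith))
        (by nlinarith [sq_nonneg (s - 1/2)]) hp)
  simpa [smul_eq_mul] using h

lemma beta_ge (hp : 0 ≤ p) {b : ℝ} (hb0 : 0 ≤ b) (hb : b ≤ 1/2) :
    (1/2 - b) * (b * (1 - b)) ^ p ≤ ∫ s in (0:ℝ)..1, s ^ p * (1 - s) ^ p :=
  le_trans (int_lower hp hb0 hb (le_refl _))
    (int_sub hp hb0 hb (by norm_num))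

lemma beta_pos (hp : 0 ≤ p) : 0 < ∫ s in (0:ℝ)..1, s ^ p * (1 - s) ^ p :=
  lt_of_lt_of_le
    (by positivity :
      (0:ℝ) < (1/2 - 1/4) * ((1/4 : ℝ) * (1 - 1/4)) ^ p)
    (beta_ge hp (by norm_num) (by norm_num))

lemma reg_eq (p x : ℝ) (hx0 : 0 < x) (hx1 : x < 1) :
    regIncBeta (p+1) (p+1) x =
      (∫ s in (0:ℝ)..x, s ^ p * (1 - s) ^ p) / (∫ s in (0:ℝ)..1, s ^ p * (1 - s) ^ p) := by
  rw [regIncBeta, if_neg (by linarith), if_neg (by linarith), betaFun]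
  simp [add_sub_cancel_right]

lemma reg_mono (hp : 0 ≤ p) {x y : ℝ} (hx : 0 < x) (hxy : x ≤ y) (hy : y < 1) :
    regIncBeta (p+1) (p+1) x ≤ regIncBeta (p+1) (p+1) y := by
  rw [reg_eq p x hx (lt_of_le_of_lt hxy hy), reg_eq p y (lt_of_lt_of_le hx hxy) hy]
  exact (div_le_div_iff_of_pos_right (beta_pos hp)).mpr (int_mono hp hx.le hxy hy.le)

lemma rpow_shift {q : ℝ} (hq : 0 < q) (d : ℕ) :
    q ^ (((d:ℝ) - 3)/2) = q ^ (-(3:ℝ)/2) * (Real.sqrt q) ^ d := by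
  rw [← Real.rpow_natCast (Real.sqrt q) d, Real.sqrt_eq_rpow, ← Real.rpow_mul hq.le,
      ← Real.rpow_add hq]
  congr 1
  ring

lemma key_upper (C lam : ℝ) (hC : 0 < C) (hlam : 1 < lam) (n : ℕ → ℕ)
    (hn : Filter.Tendsto (fun d => (n d : ℝ) / (C * lam ^ d)) Filter.atTop (nhds 1))
    (t b : ℝ) (ht0 : 0 < t) (ht : t ≤ 1/2) (hb0 : 0 < b) (hb : b < 1/2)
    (hcmp : t*(1-t)*lam^2 < b*(1-b)) :
    ∀ᶠ d : ℕ in Filter.atTop,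
      (n d : ℝ) * regIncBeta (((d:ℝ)-1)/2) (((d:ℝ)-1)/2) t < 1 := by
  have hbb : 0 < b * (1-b) := by nlinarith
  have htt : 0 < t * (1-t) := by nlinarith
  set q : ℝ := (t*(1-t)) / (b*(1-b)) with hqdef
  have hq0 : 0 < q := div_pos htt hbb
  have hql : lam ^ 2 * q < 1 := by
    have h1 : lam ^ 2 * q = (t*(1-t)*lam^2) / (b*(1-b)) := by rw [hqdef]; ring
    rw [h1]; exact (div_lt_one hbb).mpr hcmp
  have hρ0 : 0 ≤ lam * Real.sqrt q := by positivity
  have hρ1 : lam * Real.sqrt q < 1 := by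
    nlinarith [Real.sq_sqrt hq0.le, Real.sqrt_nonneg q, sq_nonneg (lam * Real.sqrt q + 1)]
  set K : ℝ := C * (t/(1/2 - b)) * q ^ (-(3:ℝ)/2) with hKdef
  have hg0 : Filter.Tendsto
      (fun d : ℕ => ((n d : ℝ) / (C * lam ^ d)) * (K * (lam * Real.sqrt q) ^ d))
      Filter.atTop (nhds 0) := by
    have := hn.mul (Filter.Tendsto.mul (tendsto_const_nhds (x := K))
      (tendsto_pow_atTop_nhds_zero_of_lt_one hρ0 hρ1))
    simpa using this
  filter_upwards [hg0.eventually_lt_const one_pos, Filter.eventually_ge_atTop 3]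
    with d h1 h3
  have hd3 : (3:ℝ) ≤ (d:ℝ) := by exact_mod_cast h3
  set p : ℝ := ((d:ℝ) - 3)/2 with hpd
  have hp : 0 ≤ p := by rw [hpd]; linarith
  have ha : ((d:ℝ)-1)/2 = p + 1 := by rw [hpd]; ring
  have hBpos := beta_pos hp
  have hB := beta_ge hp hb0.le hb.le
  have hN := int_upper hp ht0.le ht
  have hden : 0 < (1/2 - b) * (b*(1-b)) ^ p :=
    mul_pos (by linarith) (Real.rpow_pos_of_pos hbb p)
  have hbound : (∫ s in (0:ℝ)..t, s ^ p * (1 - s) ^ p) / (∫ s in (0:ℝ)..1, s ^ p * (1 - s) ^ p)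
      ≤ (t/(1/2-b)) * q ^ p := by
    have h2 : (∫ s in (0:ℝ)..t, s ^ p * (1 - s) ^ p) / (∫ s in (0:ℝ)..1, s ^ p * (1 - s) ^ p)
        ≤ (t * (t*(1-t)) ^ p) / ((1/2 - b) * (b*(1-b)) ^ p) :=
      div_le_div₀ (by positivity) hN hden hB
    have h3' : (t * (t*(1-t)) ^ p) / ((1/2 - b) * (b*(1-b)) ^ p)
        = (t/(1/2-b)) * q ^ p := by
      rw [hqdef, Real.div_rpow htt.le hbb.le, div_mul_div_comm]
    linarith [h2, h3'.le, h3'.ge]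
  have hCl : (C * lam ^ d) ≠ 0 := by positivity
  have hnd : ((n d : ℝ) / (C * lam ^ d)) * (C * lam ^ d) = (n d : ℝ) :=
    div_mul_cancel₀ _ hCl
  have hkey : (n d : ℝ) * ((t/(1/2-b)) * q ^ p)
      = ((n d : ℝ) / (C * lam ^ d)) * (K * (lam * Real.sqrt q) ^ d) := by
    rw [hpd, rpow_shift hq0 d,
      show ((n d : ℝ) / (C * lam ^ d)) * (K * (lam * Real.sqrt q) ^ d)
        = (((n d : ℝ) / (C * lam ^ d)) * (C * lam ^ d))
            * ((t/(1/2-b)) * (q ^ (-(3:ℝ)/2) * (Real.sqrt q) ^ d)) from by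
          rw [hKdef, mul_pow]; ring,
      hnd]
  calc (n d : ℝ) * regIncBeta (((d:ℝ)-1)/2) (((d:ℝ)-1)/2) t
      ≤ (n d : ℝ) * ((t/(1/2-b)) * q ^ p) := by
        rw [ha, reg_eq p t ht0 (by linarith)]
        exact mul_le_mul_of_nonneg_left hbound (Nat.cast_nonneg _)
    _ = ((n d : ℝ) / (C * lam ^ d)) * (K * (lam * Real.sqrt q) ^ d) := hkey
    _ < 1 := h1

lemma key_lower (C lam : ℝ) (hC : 0 < C) (hlam : 1 < lam) (n : ℕ → ℕ)
    (hn : Filter.Tendsto (fun d => (n d : ℝ) / (C * lam ^ d)) Filter.atTop (nhds 1))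
    (a t : ℝ) (ha0 : 0 < a) (hat : a < t) (ht : t ≤ 1/2)
    (hcmp : 1 < 4*(a*(1-a))*lam^2) :
    ∀ᶠ d : ℕ in Filter.atTop,
      1 < (n d : ℝ) * regIncBeta (((d:ℝ)-1)/2) (((d:ℝ)-1)/2) t := by
  have haa : 0 < a * (1-a) := by nlinarith
  set u : ℝ := 4*(a*(1-a)) with hudef
  have hu0 : 0 < u := by positivity
  have hσ1 : 1 < lam * Real.sqrt u := by
    have h2 : (lam * Real.sqrt u)^2 = lam^2 * u := by
      rw [mul_pow, Real.sq_sqrt hu0.le]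
    have h3 : 0 ≤ lam * Real.sqrt u := by positivity
    nlinarith [h2, h3]
  set K : ℝ := C * (t - a) * u ^ (-(3:ℝ)/2) with hKdef
  have hK : 0 < K := by
    have : 0 < t - a := by linarith
    positivity
  have hg : Filter.Tendsto
      (fun d : ℕ => ((n d : ℝ) / (C * lam ^ d)) * K * (lam * Real.sqrt u) ^ d)
      Filter.atTop Filter.atTop := by
    have h1 : Filter.Tendsto (fun d : ℕ => ((n d : ℝ) / (C * lam ^ d)) * K)
        Filter.atTop (nhds K) := by simpa using hn.mul_const K
    exact Filter.Tendsto.pos_mul_atTop hK h1 (tendsto_pow_atTop_atTop_of_one_lt hσ1)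
  filter_upwards [hg.eventually_gt_atTop 1, Filter.eventually_ge_atTop 3]
    with d h1 h3
  have hd3 : (3:ℝ) ≤ (d:ℝ) := by exact_mod_cast h3
  set p : ℝ := ((d:ℝ) - 3)/2 with hpd
  have hp : 0 ≤ p := by rw [hpd]; linarith
  have ha' : ((d:ℝ)-1)/2 = p + 1 := by rw [hpd]; ring
  have hBpos := beta_pos hp
  have hBle := beta_le hp
  have hsplit := intervalIntegral.integral_add_adjacent_intervals
    (fint (p := p) hp 0 a) (fint (p := p) hp a t)
  have h0a := int_nonneg hp (le_refl (0:ℝ)) ha0.le (by linarith)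
  have hN : (t - a) * (a*(1-a)) ^ p ≤ ∫ s in (0:ℝ)..t, s ^ p * (1 - s) ^ p := by
    have h4 := int_lower hp ha0.le hat.le ht
    linarith [hsplit.symm.le, hsplit.le]
  have hbound : (t - a) * u ^ p
      ≤ (∫ s in (0:ℝ)..t, s ^ p * (1 - s) ^ p) / (∫ s in (0:ℝ)..1, s ^ p * (1 - s) ^ p) := by
    have h2 : ((t - a) * (a*(1-a)) ^ p) / ((1/4:ℝ) ^ p)
        ≤ (∫ s in (0:ℝ)..t, s ^ p * (1 - s) ^ p) / (∫ s in (0:ℝ)..1, s ^ p * (1 - s) ^ p) :=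
      div_le_div₀ (int_nonneg hp (le_refl (0:ℝ)) (by linarith) (by linarith)) hN hBpos hBle
    have h3' : ((t - a) * (a*(1-a)) ^ p) / ((1/4:ℝ) ^ p) = (t - a) * u ^ p := by
      rw [mul_div_assoc, ← Real.div_rpow haa.le (by norm_num : (0:ℝ) ≤ 1/4)]
      congr 2
      rw [hudef]; ring
    linarith [h2, h3'.le, h3'.ge]
  have hCl : (C * lam ^ d) ≠ 0 := by positivity
  have hnd : ((n d : ℝ) / (C * lam ^ d)) * (C * lam ^ d) = (n d : ℝ) :=
    div_mul_cancel₀ _ hCl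
  have hkey : (n d : ℝ) * ((t - a) * u ^ p)
      = ((n d : ℝ) / (C * lam ^ d)) * K * (lam * Real.sqrt u) ^ d := by
    rw [hpd, rpow_shift hu0 d,
      show ((n d : ℝ) / (C * lam ^ d)) * K * (lam * Real.sqrt u) ^ d
        = (((n d : ℝ) / (C * lam ^ d)) * (C * lam ^ d))
            * ((t - a) * (u ^ (-(3:ℝ)/2) * (Real.sqrt u) ^ d)) from by
          rw [hKdef, mul_pow]; ring,
      hnd]
  calc (1:ℝ) < ((n d : ℝ) / (C * lam ^ d)) * K * (lam * Real.sqrt u) ^ d := h1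
    _ = (n d : ℝ) * ((t - a) * u ^ p) := hkey.symm
    _ ≤ (n d : ℝ) * regIncBeta (((d:ℝ)-1)/2) (((d:ℝ)-1)/2) t := by
        rw [ha', reg_eq p t (lt_trans ha0 hat) (by linarith)]
        exact mul_le_mul_of_nonneg_left hbound (Nat.cast_nonneg _)

lemma reg_mono' {d : ℕ} (hd : 3 ≤ d) {x y : ℝ} (hx : 0 < x) (hxy : x ≤ y) (hy : y < 1) :
    regIncBeta (((d:ℝ)-1)/2) (((d:ℝ)-1)/2) x ≤ regIncBeta (((d:ℝ)-1)/2) (((d:ℝ)-1)/2) y := by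
  have hd3 : (3:ℝ) ≤ (d:ℝ) := by exact_mod_cast hd
  have ha : ((d:ℝ)-1)/2 = ((d:ℝ)-3)/2 + 1 := by ring
  rw [ha]
  exact reg_mono (by linarith) hx hxy hy

end helpers

set_option maxHeartbeats 1000000 in
/-- If `n = n(d) = C λ^d (1+o(1))` as `d → ∞`, with `λ > 1`, `C > 0`, then
the `1/n(d)` quantile `κ_{n(d),d}` of `Beta((d-1)/2,(d-1)/2)` converges to
`(1/2)[1 - √(1 - 1/λ²)]`. -/
theorem stmt17 (C lam : ℝ) (hC : 0 < C) (hlam : 1 < lam) (n : ℕ → ℕ)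
    (hn : Filter.Tendsto (fun d => (n d : ℝ) / (C * lam ^ d)) Filter.atTop (nhds 1))
    (κ : ℕ → ℝ)
    (hκ : ∀ d, 3 ≤ d → κ d ∈ Set.Ioc (0:ℝ) (1/2) ∧
      regIncBeta (((d:ℝ) - 1)/2) (((d:ℝ) - 1)/2) (κ d) = 1/(n d : ℝ)) :
    Filter.Tendsto κ Filter.atTop
      (nhds ((1/2) * (1 - Real.sqrt (1 - 1/lam ^ 2)))) := by
  have hlam0 : 0 < lam := lt_trans one_pos hlam
  have hl2 : 0 < lam ^ 2 := by positivity
  have hlam2 : 1 < lam ^ 2 := by nlinarith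
  have hinv : 0 < 1 - 1/lam ^ 2 := by
    have h : 1/lam ^ 2 < 1 := by rw [div_lt_one hl2]; exact hlam2
    linarith
  set s : ℝ := Real.sqrt (1 - 1/lam ^ 2) with hsdef
  have hs0 : 0 < s := Real.sqrt_pos.mpr hinv
  have hs1 : s < 1 := by
    have hlt : 1 - 1/lam ^ 2 < 1 := by
      have h : 0 < 1/lam ^ 2 := by positivity
      linarith
    have h := Real.sqrt_lt_sqrt (by linarith : (0:ℝ) ≤ 1 - 1/lam ^ 2) hlt
    rwa [Real.sqrt_one] at h
  have hs2 : s ^ 2 = 1 - 1/lam ^ 2 := Real.sq_sqrt hinv.le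
  set κs : ℝ := (1/2) * (1 - s) with hκsdef
  have hκ0 : 0 < κs := by rw [hκsdef]; nlinarith
  have hκhalf : κs < 1/2 := by rw [hκsdef]; nlinarith
  have h4 : 4*(κs*(1-κs))*lam ^ 2 = 1 := by
    have h : 4*(κs*(1-κs)) = 1 - s ^ 2 := by rw [hκsdef]; ring
    rw [h, hs2]
    field_simp
    ring
  have hnpos : ∀ᶠ d : ℕ in Filter.atTop, 0 < (n d : ℝ) := by
    have h1 : ∀ᶠ d : ℕ in Filter.atTop, (1:ℝ)/2 < (n d : ℝ)/(C*lam ^ d) :=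
      hn.eventually_const_lt (by norm_num)
    filter_upwards [h1] with d hd
    have hX : 0 < C * lam ^ d := by positivity
    have h := (lt_div_iff₀ hX).mp hd
    nlinarith
  rw [Metric.tendsto_atTop]
  intro η hη
  obtain ⟨t1, ht10, ht1κ, ht1lb⟩ : ∃ t1 : ℝ, 0 < t1 ∧ t1 < κs ∧ κs - η/2 ≤ t1 :=
    ⟨max (κs/2) (κs - η/2), lt_of_lt_of_le (by linarith) (le_max_left _ _),
      max_lt (by linarith) (by linarith), le_max_right _ _⟩
  obtain ⟨t2, ht2κ, ht2h, ht2ub⟩ : ∃ t2 : ℝ, κs < t2 ∧ t2 < 1/2 ∧ t2 ≤ κs + η/2 :=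
    ⟨min ((κs + 1/2)/2) (κs + η/2), lt_min (by linarith) (by linarith),
      lt_of_le_of_lt (min_le_left _ _) (by linarith), min_le_right _ _⟩
  -- upper estimate at t1
  have hprod1 : t1*(1-t1) < κs*(1-κs) := by nlinarith
  have hm : t1*(1-t1)*lam ^ 2 < 1/4 := by nlinarith [mul_lt_mul_of_pos_right hprod1 hl2]
  obtain ⟨b, hb0, hbh, hcmp1⟩ :
      ∃ b : ℝ, 0 < b ∧ b < 1/2 ∧ t1*(1-t1)*lam ^ 2 < b*(1-b) := by
    obtain ⟨ε, hε0, hε4, hεm⟩ :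
        ∃ ε : ℝ, 0 < ε ∧ ε ≤ 1/4 ∧ ε ≤ 1/4 - t1*(1-t1)*lam ^ 2 :=
      ⟨min (1/4) (1/4 - t1*(1-t1)*lam ^ 2), lt_min (by norm_num) (by linarith),
        min_le_left _ _, min_le_right _ _⟩
    exact ⟨1/2 - ε, by linarith, by linarith, by nlinarith [hεm, hm, hε0, hε4]⟩
  have hEup := key_upper C lam hC hlam n hn t1 b ht10
    (by linarith : t1 ≤ 1/2) hb0 hbh hcmp1
  -- lower estimate at t2
  obtain ⟨a, haκ, hat2⟩ : ∃ a : ℝ, κs < a ∧ a < t2 :=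
    ⟨(t2 + κs)/2, by linarith, by linarith⟩
  have ha0 : 0 < a := lt_trans hκ0 haκ
  have hah : a < 1/2 := lt_trans hat2 ht2h
  have hprod2 : κs*(1-κs) < a*(1-a) := by nlinarith
  have hcmp2 : 1 < 4*(a*(1-a))*lam ^ 2 := by
    nlinarith [mul_lt_mul_of_pos_right hprod2 hl2]
  have hElo := key_lower C lam hC hlam n hn a t2 ha0 hat2 (le_of_lt ht2h) hcmp2
  have hev : ∀ᶠ d : ℕ in Filter.atTop, dist (κ d) κs < η := by
    filter_upwards [hEup, hElo, hnpos, Filter.eventually_ge_atTop 3]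
      with d hup hlo hnp hd3
    obtain ⟨⟨hκd0, hκdh⟩, hreg⟩ := hκ d hd3
    have hone : (n d : ℝ) * regIncBeta (((d:ℝ)-1)/2) (((d:ℝ)-1)/2) (κ d) = 1 := by
      rw [hreg]
      field_simp
    have h1 : t1 < κ d := by
      by_contra hc
      push_neg at hc
      have hmono := reg_mono' hd3 hκd0 hc (by linarith : t1 < 1)
      have h := mul_le_mul_of_nonneg_left hmono (le_of_lt hnp)
      rw [hone] at h
      linarith
    have h2 : κ d < t2 := by
      by_contra hc
      push_neg at hc
      have hmono := reg_mono' hd3 (lt_trans hκ0 ht2κ) hc (by linarith : κ d < 1)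
      have h := mul_le_mul_of_nonneg_left hmono (le_of_lt hnp)
      rw [hone] at h
      linarith
    rw [Real.dist_eq, abs_lt]
    constructor <;> linarith
  exact Filter.eventually_atTop.mp hev
end

section
/- Let κ_{n,d} be the 1/n quantile of Beta((d-1)/2,(d-1)/2), d ≥ 3. If n = n(d) → ∞ with (log n)/d → 0 as d → ∞, then κ_{n,d} → 1/2; if instead n^{1/d} → ∞ as d → ∞, then κ_{n,d} → 0. -/
open MeasureTheory Real Set
open scoped ENNReal NNReal

private lemma auxCont {c : ℝ} (hc : 0 ≤ c) :
    Continuous (fun s : ℝ => s ^ c * (1 - s) ^ c) := by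
  have h1 : Continuous fun s : ℝ => s ^ c :=
    continuous_iff_continuousAt.2 fun x => Real.continuousAt_rpow_const x c (Or.inr hc)
  exact h1.mul (h1.comp (continuous_const.sub continuous_id))

private lemma auxII {c : ℝ} (hc : 0 ≤ c) (a b : ℝ) :
    IntervalIntegrable (fun s : ℝ => s ^ c * (1 - s) ^ c) MeasureTheory.volume a b :=
  (auxCont hc).intervalIntegrable a b

private lemma auxNonneg {c s : ℝ} (h0 : 0 ≤ s) (h1 : s ≤ 1) :
    0 ≤ s ^ c * (1 - s) ^ c :=
  mul_nonneg (Real.rpow_nonneg h0 c) (Real.rpow_nonneg (by linarith) c)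

private lemma auxEq {c s : ℝ} (h0 : 0 ≤ s) (h1 : s ≤ 1) :
    s ^ c * (1 - s) ^ c = (s * (1 - s)) ^ c :=
  (Real.mul_rpow h0 (by linarith)).symm

private lemma auxUpper {c : ℝ} (hc : 0 ≤ c) {x m : ℝ} (hx0 : 0 ≤ x) (hx1 : x ≤ 1)
    (hm0 : 0 ≤ m) (hm : ∀ s ∈ Set.Icc (0:ℝ) x, s * (1 - s) ≤ m) :
    (∫ s in (0:ℝ)..x, s ^ c * (1 - s) ^ c) ≤ x * m ^ c := by
  have h := intervalIntegral.integral_mono_on hx0 (auxII hc 0 x)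
    (intervalIntegrable_const (c := m ^ c)) (fun s hs => by
      rw [auxEq hs.1 (le_trans hs.2 hx1)]
      exact Real.rpow_le_rpow (mul_nonneg hs.1 (by linarith [hs.2, hx1])) (hm s hs) hc)
  simpa [intervalIntegral.integral_const, smul_eq_mul] using h

private lemma auxLowerSeg {c : ℝ} (hc : 0 ≤ c) {a b m : ℝ} (h0 : 0 ≤ a) (hab : a ≤ b)
    (hb1 : b ≤ 1) (hm0 : 0 ≤ m) (hm : ∀ s ∈ Set.Icc a b, m ≤ s * (1 - s)) :
    (b - a) * m ^ c ≤ ∫ s in a..b, s ^ c * (1 - s) ^ c := by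
  have h := intervalIntegral.integral_mono_on hab (intervalIntegrable_const (c := m ^ c))
    (auxII hc a b) (fun s hs => by
      rw [auxEq (le_trans h0 hs.1) (le_trans hs.2 hb1)]
      exact Real.rpow_le_rpow hm0 (hm s hs) hc)
  simpa [intervalIntegral.integral_const, smul_eq_mul] using h

private lemma auxSeg {c : ℝ} (hc : 0 ≤ c) {u a b v : ℝ} (h0u : 0 ≤ u) (hua : u ≤ a)
    (hab : a ≤ b) (hbv : b ≤ v) (hv1 : v ≤ 1) :
    (∫ s in a..b, s ^ c * (1 - s) ^ c) ≤ ∫ s in u..v, s ^ c * (1 - s) ^ c := by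
  have e1 : (∫ s in u..v, s ^ c * (1 - s) ^ c)
      = (∫ s in u..a, s ^ c * (1 - s) ^ c) + ((∫ s in a..b, s ^ c * (1 - s) ^ c)
        + (∫ s in b..v, s ^ c * (1 - s) ^ c)) := by
    rw [intervalIntegral.integral_add_adjacent_intervals (auxII hc a b) (auxII hc b v),
      intervalIntegral.integral_add_adjacent_intervals (auxII hc u a) (auxII hc a v)]
  have h2 : 0 ≤ ∫ s in u..a, s ^ c * (1 - s) ^ c :=
    intervalIntegral.integral_nonneg hua fun s hs =>
      auxNonneg (le_trans h0u hs.1) (by linarith [hs.2, hab, hbv, hv1])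
  have h3 : 0 ≤ ∫ s in b..v, s ^ c * (1 - s) ^ c :=
    intervalIntegral.integral_nonneg hbv fun s hs =>
      auxNonneg (by linarith [hs.1, h0u, hua, hab]) (le_trans hs.2 hv1)
  linarith [e1]

private lemma cancelHelper {x A B ε : ℝ} (hA : 0 < A) (hε : 0 < ε) (hx : x ≤ 1/2)
    (hB : 0 ≤ B) : (x * (A * B)) / ((ε/2) * A) ≤ (1/ε) * B := by
  rw [div_le_iff₀ (by positivity)]
  have e : (1/ε) * B * ((ε/2) * A) = (1/2) * (A * B) := by field_simp
  rw [e, mul_comm A B]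
  have : x * (B * A) ≤ (1/2) * (B * A) :=
    mul_le_mul_of_nonneg_right hx (mul_nonneg hB hA.le)
  linarith

set_option maxHeartbeats 1000000 in
private lemma perD1 {c ε κ N : ℝ} (hc : 0 ≤ c) (hε : 0 < ε) (hε4 : ε ≤ 1/4)
    (hκ0 : 0 < κ) (hκle : κ ≤ 1/2 - ε) (hN : 1 ≤ N)
    (heq : (∫ s in (0:ℝ)..κ, s ^ c * (1 - s) ^ c) /
      (∫ s in (0:ℝ)..1, s ^ c * (1 - s) ^ c) = 1 / N) :
    Real.log ε - c * Real.log ((1/4 - ε^2) / (1/4 - ε^2/4)) ≤ Real.log N := by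
  have hm₁ : (0:ℝ) < 1/4 - ε^2/4 := by nlinarith
  have hm₂ : (0:ℝ) < 1/4 - ε^2 := by nlinarith
  have hm₂₁ : 1/4 - ε^2 < 1/4 - ε^2/4 := by nlinarith
  have hr0 : 0 < (1/4 - ε^2) / (1/4 - ε^2/4) := div_pos hm₂ hm₁
  set r := (1/4 - ε^2) / (1/4 - ε^2/4) with hrdef
  -- lower bound on B
  have hB1 : (1/2 - (1/2 - ε/2)) * (1/4 - ε^2/4) ^ c
      ≤ ∫ s in (1/2 - ε/2 : ℝ)..(1/2 : ℝ), s ^ c * (1 - s) ^ c :=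
    auxLowerSeg hc (by linarith) (by linarith) (by norm_num) hm₁.le (fun s hs => by
      nlinarith [mul_nonneg (by linarith [hs.1] : (0:ℝ) ≤ s - (1/2 - ε/2))
        (by linarith [hs.2] : (0:ℝ) ≤ 1/2 + ε/2 - s)])
  have hB2 : (∫ s in (1/2 - ε/2 : ℝ)..(1/2 : ℝ), s ^ c * (1 - s) ^ c)
      ≤ ∫ s in (0:ℝ)..1, s ^ c * (1 - s) ^ c :=
    auxSeg hc le_rfl (by linarith) (by linarith) (by norm_num) le_rfl
  have hB_low : (ε/2) * (1/4 - ε^2/4) ^ c ≤ ∫ s in (0:ℝ)..1, s ^ c * (1 - s) ^ c := by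
    have e : (1/2 : ℝ) - (1/2 - ε/2) = ε/2 := by ring
    rw [e] at hB1; linarith
  have hd_pos : 0 < (ε/2) * (1/4 - ε^2/4) ^ c :=
    mul_pos (by linarith) (Real.rpow_pos_of_pos hm₁ c)
  -- upper bound on numerator
  have hup : (∫ s in (0:ℝ)..κ, s ^ c * (1 - s) ^ c) ≤ (1/2 - ε) * (1/4 - ε^2) ^ c := by
    have h1 : (∫ s in (0:ℝ)..κ, s ^ c * (1 - s) ^ c)
        ≤ ∫ s in (0:ℝ)..(1/2 - ε : ℝ), s ^ c * (1 - s) ^ c :=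
      auxSeg hc le_rfl le_rfl hκ0.le hκle (by linarith)
    have h2 : (∫ s in (0:ℝ)..(1/2 - ε : ℝ), s ^ c * (1 - s) ^ c)
        ≤ (1/2 - ε) * (1/4 - ε^2) ^ c :=
      auxUpper hc (by linarith) (by linarith) hm₂.le (fun s hs => by
        nlinarith [mul_nonneg (by linarith [hs.2] : (0:ℝ) ≤ 1/2 - ε - s)
          (by linarith [hs.2] : (0:ℝ) ≤ 1/2 + ε - s)])
    linarith
  -- combine
  have h3 : 1/N ≤ ((1/2 - ε) * (1/4 - ε^2) ^ c) / ((ε/2) * (1/4 - ε^2/4) ^ c) := by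
    rw [← heq]
    exact div_le_div₀ (mul_nonneg (by linarith) (Real.rpow_nonneg hm₂.le c)) hup hd_pos hB_low
  have key : (1/4 - ε^2) ^ c = (1/4 - ε^2/4) ^ c * r ^ c := by
    rw [← Real.mul_rpow hm₁.le hr0.le]
    congr 1
    rw [hrdef, mul_comm, div_mul_cancel₀ _ hm₁.ne']
  have h4 : ((1/2 - ε) * (1/4 - ε^2) ^ c) / ((ε/2) * (1/4 - ε^2/4) ^ c)
      ≤ (1/ε) * r ^ c := by
    rw [key]
    exact cancelHelper (Real.rpow_pos_of_pos hm₁ c) hε (by linarith)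
      (Real.rpow_nonneg hr0.le c)
  have hN0 : (0:ℝ) < N := lt_of_lt_of_le one_pos hN
  have hrc : 0 < r ^ c := Real.rpow_pos_of_pos hr0 c
  have h5 : 1/N ≤ r ^ c / ε := by
    have e : (1/ε) * r ^ c = r ^ c / ε := by ring
    rw [← e]; exact h3.trans h4
  have h6 : ε / r ^ c ≤ N := by
    rw [div_le_div_iff₀ hN0 hε] at h5
    rw [div_le_iff₀ hrc]
    linarith
  calc Real.log ε - c * Real.log r = Real.log (ε / r ^ c) := by
        rw [Real.log_div hε.ne' hrc.ne', Real.log_rpow hr0]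
    _ ≤ Real.log N := Real.log_le_log (div_pos hε hrc) h6

set_option maxHeartbeats 1000000 in
private lemma perD2 {c ε κ N : ℝ} (hc : 0 ≤ c) (hε : 0 < ε) (hε2 : ε ≤ 1/2)
    (hκ2 : κ ≤ 1/2) (hκge : ε ≤ κ) (hN0 : 0 ≤ N)
    (heq : (∫ s in (0:ℝ)..κ, s ^ c * (1 - s) ^ c) /
      (∫ s in (0:ℝ)..1, s ^ c * (1 - s) ^ c) = 1 / N) :
    N ≤ (2/ε) * (1 / (2*ε*(1 - ε/2))) ^ c := by
  have hm0 : (0:ℝ) < (ε/2) * (1 - ε/2) := by nlinarith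
  have hρ0 : (0:ℝ) < 2*ε*(1 - ε/2) := by nlinarith
  have h4c : ((1/4:ℝ) ^ c) ≠ 0 := (Real.rpow_pos_of_pos (by norm_num) c).ne'
  -- upper bound on B
  have hB_up : (∫ s in (0:ℝ)..1, s ^ c * (1 - s) ^ c) ≤ (1/4 : ℝ) ^ c := by
    have h := auxUpper hc (m := (1/4:ℝ)) (by norm_num) le_rfl (by norm_num)
      (fun s hs => by nlinarith [sq_nonneg (s - 1/2)])
    linarith [h]
  -- lower bound on the partial integral and on B
  have hseg : (ε - ε/2) * ((ε/2)*(1 - ε/2)) ^ c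
      ≤ ∫ s in (ε/2 : ℝ)..ε, s ^ c * (1 - s) ^ c :=
    auxLowerSeg hc (by linarith) (by linarith) (by linarith) hm0.le (fun s hs => by
      nlinarith [mul_nonneg (by linarith [hs.1] : (0:ℝ) ≤ s - ε/2)
        (by linarith [hs.2] : (0:ℝ) ≤ 1 - ε/2 - s)])
  have eε : ε - ε/2 = ε/2 := by ring
  rw [eε] at hseg
  have hseg2 : (∫ s in (ε/2 : ℝ)..ε, s ^ c * (1 - s) ^ c)
      ≤ ∫ s in (0:ℝ)..κ, s ^ c * (1 - s) ^ c :=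
    auxSeg hc le_rfl (by linarith) (by linarith) hκge (by linarith)
  have hInt_low : (ε/2) * ((ε/2)*(1 - ε/2)) ^ c ≤ ∫ s in (0:ℝ)..κ, s ^ c * (1 - s) ^ c :=
    hseg.trans hseg2
  have hseg3 : (∫ s in (ε/2 : ℝ)..ε, s ^ c * (1 - s) ^ c)
      ≤ ∫ s in (0:ℝ)..1, s ^ c * (1 - s) ^ c :=
    auxSeg hc le_rfl (by linarith) (by linarith) (by linarith) le_rfl
  have hmpos : 0 < (ε/2) * ((ε/2)*(1 - ε/2)) ^ c :=
    mul_pos (by linarith) (Real.rpow_pos_of_pos hm0 c)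
  have hB_pos : 0 < ∫ s in (0:ℝ)..1, s ^ c * (1 - s) ^ c :=
    lt_of_lt_of_le hmpos (hseg.trans hseg3)
  -- combine
  have h2 : ((ε/2) * ((ε/2)*(1 - ε/2)) ^ c) / ((1/4 : ℝ) ^ c) ≤ 1/N := by
    rw [← heq]
    exact div_le_div₀ (le_trans hmpos.le hInt_low) hInt_low hB_pos hB_up
  have key : ((ε/2)*(1 - ε/2) : ℝ) ^ c = (2*ε*(1 - ε/2)) ^ c * (1/4 : ℝ) ^ c := by
    rw [← Real.mul_rpow hρ0.le (by norm_num)]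
    congr 1
    ring
  have e2 : ((ε/2) * ((ε/2)*(1 - ε/2)) ^ c) / ((1/4 : ℝ) ^ c)
      = (ε/2) * (2*ε*(1 - ε/2)) ^ c := by
    rw [key, show (ε/2) * ((2*ε*(1 - ε/2)) ^ c * (1/4:ℝ) ^ c)
        = ((ε/2) * (2*ε*(1 - ε/2)) ^ c) * ((1/4:ℝ) ^ c) from by ring,
      mul_div_assoc, div_self h4c, mul_one]
  rw [e2] at h2
  have hpos : 0 < (ε/2) * (2*ε*(1 - ε/2)) ^ c :=
    mul_pos (by linarith) (Real.rpow_pos_of_pos hρ0 c)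
  have hNpos : 0 < N := by
    rcases eq_or_lt_of_le hN0 with h | h
    · exfalso
      rw [← h] at h2
      norm_num at h2
      linarith
    · exact h
  have h5 : N ≤ 1/((ε/2) * (2*ε*(1 - ε/2)) ^ c) := by
    rw [le_div_iff₀ hpos]
    calc N * ((ε/2) * (2*ε*(1 - ε/2)) ^ c) ≤ N * (1/N) :=
          mul_le_mul_of_nonneg_left h2 hNpos.le
      _ = 1 := by field_simp
  have e3 : 1/((ε/2) * (2*ε*(1 - ε/2)) ^ c) = (2/ε) * (1/(2*ε*(1 - ε/2))) ^ c := by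
    rw [one_div (2*ε*(1 - ε/2)), Real.inv_rpow hρ0.le]
    rw [eq_comm, eq_div_iff (mul_pos (by linarith : (0:ℝ) < ε/2)
      (Real.rpow_pos_of_pos hρ0 c)).ne']
    field_simp
    exact div_self (Real.rpow_pos_of_pos (by nlinarith : (0:ℝ) < ε * (2 - ε)) c).ne'
  rw [e3] at h5
  exact h5

set_option maxHeartbeats 1000000 in
/-- Let `κ_{n(d),d}` be the `1/n(d)` quantile of `Beta((d-1)/2,(d-1)/2)`.
If `n(d) → ∞` with `(log n(d))/d → 0` then `κ_{n(d),d} → 1/2`; if instead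
`n(d)^{1/d} → ∞` then `κ_{n(d),d} → 0`. -/
theorem stmt18 (n : ℕ → ℕ) (κ : ℕ → ℝ)
    (hκ : ∀ d, 3 ≤ d → κ d ∈ Set.Ioc (0:ℝ) (1/2) ∧
      regIncBeta (((d:ℝ) - 1)/2) (((d:ℝ) - 1)/2) (κ d) = 1/(n d : ℝ)) :
    ((Filter.Tendsto (fun d => (n d : ℝ)) Filter.atTop Filter.atTop →
      Filter.Tendsto (fun d => Real.log (n d) / (d:ℝ)) Filter.atTop (nhds 0) →
      Filter.Tendsto κ Filter.atTop (nhds (1/2))) ∧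
     (Filter.Tendsto (fun d => (n d : ℝ) ^ ((1:ℝ)/(d:ℝ))) Filter.atTop Filter.atTop →
      Filter.Tendsto κ Filter.atTop (nhds 0))) := by
  have key : ∀ d : ℕ, 3 ≤ d → 0 < κ d ∧ κ d ≤ 1/2 ∧
      (∫ s in (0:ℝ)..κ d, s ^ ((((d:ℝ) - 1)/2) - 1) * (1 - s) ^ ((((d:ℝ) - 1)/2) - 1)) /
      (∫ s in (0:ℝ)..1, s ^ ((((d:ℝ) - 1)/2) - 1) * (1 - s) ^ ((((d:ℝ) - 1)/2) - 1))
        = 1/(n d : ℝ) := by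
    intro d hd
    obtain ⟨⟨h0, h2⟩, heq⟩ := hκ d hd
    refine ⟨h0, h2, ?_⟩
    rw [regIncBeta, if_neg (by linarith), if_neg (by linarith), betaFun] at heq
    exact heq
  have hcnn : ∀ d : ℕ, 3 ≤ d → 0 ≤ (((d:ℝ) - 1)/2) - 1 := by
    intro d hd
    have : (3:ℝ) ≤ (d:ℝ) := by exact_mod_cast hd
    linarith
  constructor
  · -- Part 1
    intro hn hlog
    rw [Metric.tendsto_nhds]
    intro ε hε
    obtain ⟨ε₀, hε₀def⟩ : ∃ x : ℝ, x = min ε (1/4) := ⟨_, rfl⟩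
    have hε₀ : (0:ℝ) < ε₀ := by rw [hε₀def]; exact lt_min hε (by norm_num)
    have hε₀4 : ε₀ ≤ 1/4 := by rw [hε₀def]; exact min_le_right _ _
    have hm₁ : (0:ℝ) < 1/4 - ε₀^2/4 := by nlinarith
    have hm₂ : (0:ℝ) < 1/4 - ε₀^2 := by nlinarith
    have hr0 : 0 < (1/4 - ε₀^2) / (1/4 - ε₀^2/4) := div_pos hm₂ hm₁
    have hr1 : (1/4 - ε₀^2) / (1/4 - ε₀^2/4) < 1 := (div_lt_one hm₁).2 (by nlinarith)
    obtain ⟨L, hLdef⟩ : ∃ x : ℝ, x = -Real.log ((1/4 - ε₀^2) / (1/4 - ε₀^2/4)) :=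
      ⟨_, rfl⟩
    have hL : 0 < L := by
      rw [hLdef]
      linarith [Real.log_neg hr0 hr1]
    have ev1 : ∀ᶠ d in Filter.atTop, Real.log (n d) / (d:ℝ) < L/4 := by
      filter_upwards [(Metric.tendsto_nhds.1 hlog) (L/4) (by linarith)] with d hd
      rw [Real.dist_eq, sub_zero] at hd
      exact (abs_lt.1 hd).2
    have ev2 : ∀ᶠ d in Filter.atTop, (1:ℝ) ≤ (n d : ℝ) := hn.eventually_ge_atTop 1
    have ev3 : ∀ᶠ d : ℕ in Filter.atTop, 9 ≤ d := Filter.eventually_ge_atTop 9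
    have ev4 : ∀ᶠ d : ℕ in Filter.atTop, 12 * |Real.log ε₀| ≤ (d:ℝ) * L := by
      have h := tendsto_natCast_atTop_atTop (R := ℝ) |>.eventually_ge_atTop
        (12 * |Real.log ε₀| / L)
      filter_upwards [h] with d hd
      rw [div_le_iff₀ hL] at hd
      linarith
    filter_upwards [ev1, ev2, ev3, ev4] with d h1 h2 h3 h4
    have hd3 : 3 ≤ d := by omega
    obtain ⟨hκ0, hκ2, heq⟩ := key d hd3
    have hc : 0 ≤ (((d:ℝ) - 1)/2) - 1 := hcnn d hd3
    rw [Real.dist_eq, abs_of_nonpos (by linarith), neg_sub]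
    by_contra hcon
    push_neg at hcon
    have hε₀ε : ε₀ ≤ ε := by rw [hε₀def]; exact min_le_left _ _
    have hκle : κ d ≤ 1/2 - ε₀ := by linarith
    have hlog_ge := perD1 hc hε₀ hε₀4 hκ0 hκle h2 heq
    have hd9 : (9:ℝ) ≤ (d:ℝ) := by exact_mod_cast h3
    have hd0 : (0:ℝ) < (d:ℝ) := by linarith
    have hc' : (d:ℝ)/3 ≤ (((d:ℝ) - 1)/2) - 1 := by linarith
    have h5 : -((d:ℝ)*L)/12 ≤ Real.log ε₀ := by
      have := neg_abs_le (Real.log ε₀)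
      linarith
    have h6 : L/4 * (d:ℝ) ≤ Real.log (n d) := by
      have hcL : (d:ℝ)/3 * L ≤ ((((d:ℝ) - 1)/2) - 1) * L :=
        mul_le_mul_of_nonneg_right hc' hL.le
      have e : Real.log ε₀ - ((((d:ℝ) - 1)/2) - 1) *
          Real.log ((1/4 - ε₀^2) / (1/4 - ε₀^2/4))
          = Real.log ε₀ + ((((d:ℝ) - 1)/2) - 1) * L := by
        rw [hLdef]; ring
      rw [e] at hlog_ge
      linarith
    rw [div_lt_iff₀ hd0] at h1
    linarith
  · -- Part 2
    intro hn2
    rw [Metric.tendsto_nhds]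
    intro ε hε
    obtain ⟨ε₀, hε₀def⟩ : ∃ x : ℝ, x = min ε (1/2) := ⟨_, rfl⟩
    have hε₀ : (0:ℝ) < ε₀ := by rw [hε₀def]; exact lt_min hε (by norm_num)
    have hε₀2 : ε₀ ≤ 1/2 := by rw [hε₀def]; exact min_le_right _ _
    have hρ0 : (0:ℝ) < 2*ε₀*(1 - ε₀/2) := by nlinarith
    have hρ1 : 2*ε₀*(1 - ε₀/2) ≤ 1 := by nlinarith [sq_nonneg (1 - ε₀)]
    have hx1 : (1:ℝ) ≤ 1/(2*ε₀*(1 - ε₀/2)) := by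
      rw [le_div_iff₀ hρ0]; linarith
    have h2ε : (1:ℝ) ≤ 2/ε₀ := by
      rw [le_div_iff₀ hε₀]; linarith
    have ev1 : ∀ᶠ d in Filter.atTop,
        (2/ε₀) * (1/(2*ε₀*(1 - ε₀/2))) ^ ((1:ℝ)/2) < (n d : ℝ) ^ ((1:ℝ)/(d:ℝ)) :=
      hn2.eventually_gt_atTop _
    have ev2 : ∀ᶠ d : ℕ in Filter.atTop, 3 ≤ d := Filter.eventually_ge_atTop 3
    filter_upwards [ev1, ev2] with d h1 h3
    obtain ⟨hκ0, hκ2, heq⟩ := key d h3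
    have hc : 0 ≤ (((d:ℝ) - 1)/2) - 1 := hcnn d h3
    rw [Real.dist_eq, sub_zero, abs_of_pos hκ0]
    by_contra hcon
    push_neg at hcon
    have hκge : ε₀ ≤ κ d := le_trans (by rw [hε₀def]; exact min_le_left _ _) hcon
    have hN := perD2 hc hε₀ hε₀2 hκ2 hκge (by positivity) heq
    have hd3 : (3:ℝ) ≤ (d:ℝ) := by exact_mod_cast h3
    have hd0 : (0:ℝ) < (d:ℝ) := by linarith
    have step : (n d : ℝ) ^ ((1:ℝ)/(d:ℝ))
        ≤ (2/ε₀) * (1/(2*ε₀*(1 - ε₀/2))) ^ ((1:ℝ)/2) := by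
      calc (n d : ℝ) ^ ((1:ℝ)/(d:ℝ))
          ≤ ((2/ε₀) * (1/(2*ε₀*(1 - ε₀/2))) ^ ((((d:ℝ) - 1)/2) - 1)) ^ ((1:ℝ)/(d:ℝ)) :=
            Real.rpow_le_rpow (by positivity) hN (by positivity)
        _ = (2/ε₀) ^ ((1:ℝ)/(d:ℝ)) *
            ((1/(2*ε₀*(1 - ε₀/2))) ^ ((((d:ℝ) - 1)/2) - 1)) ^ ((1:ℝ)/(d:ℝ)) :=
            Real.mul_rpow (by linarith) (Real.rpow_nonneg (by linarith) _)
        _ = (2/ε₀) ^ ((1:ℝ)/(d:ℝ)) *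
            (1/(2*ε₀*(1 - ε₀/2))) ^ (((((d:ℝ) - 1)/2) - 1) * ((1:ℝ)/(d:ℝ))) := by
            rw [← Real.rpow_mul (by linarith : (0:ℝ) ≤ 1/(2*ε₀*(1 - ε₀/2)))]
        _ ≤ (2/ε₀) * (1/(2*ε₀*(1 - ε₀/2))) ^ ((1:ℝ)/2) := by
            apply mul_le_mul ?_ ?_ (Real.rpow_nonneg (by linarith) _) (by linarith)
            · calc (2/ε₀) ^ ((1:ℝ)/(d:ℝ)) ≤ (2/ε₀) ^ (1:ℝ) :=
                    Real.rpow_le_rpow_of_exponent_le h2ε (by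
                      rw [div_le_one hd0]; linarith)
                _ = 2/ε₀ := Real.rpow_one _
            · apply Real.rpow_le_rpow_of_exponent_le hx1
              rw [mul_one_div, div_le_iff₀ hd0]
              linarith
    linarith
end
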